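/- arXiv:0804.1597 — 4 statements merged into one kernel-verified Lean document; each statement's English description precedes it below -/
import Mathlib

section
/- Let S be a shift-invariant subspace of L²(ℝ) and n a positive integer with sets B_k = ⋃_{j∈ℤ}([k,k+1)+nj). If there exists k ∈ {0,…,n−1} such that supp(f̂) ⊆ B_k for all f ∈ S, then S is (1/n)ℤ-invariant. -/
open MeasureTheory FourierTransform

noncomputable section

/-- The space `L²(ℝ)` of complex-valued square-integrable functions. -/
abbrev L2 := Lp ℂ 2 (volume : Measure ℝ)

/-- The translation operator `T_a f (x) = f (x - a)` on `L²(ℝ)`. -/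
def Tr (a : ℝ) : L2 → L2 :=
  Lp.compMeasurePreserving (fun x => x - a) (measurePreserving_sub_right volume a)

/-- `F` is the Fourier–Plancherel transform on `L²(ℝ)`: a unitary that agrees with the
classical Fourier integral `f̂(ω) = ∫ f(x) e^{-2πiωx} dx` on integrable functions. -/
def IsFourierTransform (F : L2 ≃ₗᵢ[ℂ] L2) : Prop :=
  ∀ f : L2, Integrable (f : ℝ → ℂ) volume → (F f : ℝ → ℂ) =ᵐ[volume] 𝓕 (f : ℝ → ℂ)

/-- The shift-invariant space generated by `f`: the closed span of integer translates. -/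
def SIS (f : L2) : Set L2 :=
  closure (Submodule.span ℂ {g : L2 | ∃ j : ℤ, g = Tr (j : ℝ) f} : Set L2)

/-- `B_k = ⋃_{j ∈ ℤ} ([k, k+1) + n j)`. -/
def Bset (n k : ℕ) : Set ℝ := {ω : ℝ | ∃ j : ℤ, ω - n * j ∈ Set.Ico (k : ℝ) ((k : ℝ) + 1)}

/-- `U_k = {f ∈ L² : f̂ = ĝ · χ_{B_k} for some g ∈ S}`. -/
def Uspace (F : L2 ≃ₗᵢ[ℂ] L2) (S : Set L2) (n k : ℕ) : Set L2 :=
  {f : L2 | ∃ g ∈ S, (F f : ℝ → ℂ) =ᵐ[volume] (Bset n k).indicator (F g : ℝ → ℂ)}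

namespace Stmt11Aux

open Complex Filter Set
open scoped Real ENNReal Topology

/-- Multiplication of an `L²` element by an `L^∞` function. -/
def mulL2 (φ : ℝ → ℂ) (hφ : MemLp φ ⊤ (volume : Measure ℝ)) (g : L2) : L2 :=
  ((Lp.memLp g).smul (r := 2) hφ).toLp (φ • (g : ℝ → ℂ))

lemma coeFn_mulL2 (φ : ℝ → ℂ) (hφ : MemLp φ ⊤ (volume : Measure ℝ)) (g : L2) :
    (mulL2 φ hφ g : ℝ → ℂ) =ᵐ[volume] fun ω => φ ω * (g : ℝ → ℂ) ω := by
  filter_upwards [MemLp.coeFn_toLp ((Lp.memLp g).smul (r := 2) hφ)] with ω h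
  exact h

lemma mulL2_congr (φ ψ : ℝ → ℂ) (hφ : MemLp φ ⊤ (volume : Measure ℝ))
    (hψ : MemLp ψ ⊤ (volume : Measure ℝ)) (g : L2) (h : φ = ψ) :
    mulL2 φ hφ g = mulL2 ψ hψ g := by subst h; rfl

lemma mulL2_sub (φ : ℝ → ℂ) (hφ : MemLp φ ⊤ (volume : Measure ℝ)) (g₁ g₂ : L2) :
    mulL2 φ hφ (g₁ - g₂) = mulL2 φ hφ g₁ - mulL2 φ hφ g₂ := by
  apply Lp.ext
  filter_upwards [coeFn_mulL2 φ hφ (g₁ - g₂), coeFn_mulL2 φ hφ g₁, coeFn_mulL2 φ hφ g₂,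
    Lp.coeFn_sub g₁ g₂, Lp.coeFn_sub (mulL2 φ hφ g₁) (mulL2 φ hφ g₂)] with ω h1 h2 h3 h4 h5
  rw [h1, h5, Pi.sub_apply, h2, h3, h4, Pi.sub_apply]
  ring

lemma mulL2_add' (φ ψ : ℝ → ℂ) (hφ : MemLp φ ⊤ (volume : Measure ℝ))
    (hψ : MemLp ψ ⊤ (volume : Measure ℝ)) (h : MemLp (fun ω => φ ω + ψ ω) ⊤ (volume : Measure ℝ))
    (g : L2) :
    mulL2 (fun ω => φ ω + ψ ω) h g = mulL2 φ hφ g + mulL2 ψ hψ g := by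
  apply Lp.ext
  filter_upwards [coeFn_mulL2 _ h g, coeFn_mulL2 φ hφ g, coeFn_mulL2 ψ hψ g,
    Lp.coeFn_add (mulL2 φ hφ g) (mulL2 ψ hψ g)] with ω h1 h2 h3 h4
  rw [h1, h4, Pi.add_apply, h2, h3]
  ring

lemma mulL2_smul' (c : ℂ) (φ : ℝ → ℂ) (hφ : MemLp φ ⊤ (volume : Measure ℝ))
    (h : MemLp (fun ω => c * φ ω) ⊤ (volume : Measure ℝ)) (g : L2) :
    mulL2 (fun ω => c * φ ω) h g = c • mulL2 φ hφ g := by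
  apply Lp.ext
  filter_upwards [coeFn_mulL2 _ h g, coeFn_mulL2 φ hφ g,
    Lp.coeFn_smul c (mulL2 φ hφ g)] with ω h1 h2 h3
  rw [h1, h3, Pi.smul_apply, h2, smul_eq_mul]
  ring

lemma norm_mulL2_le (φ : ℝ → ℂ) (hφ : MemLp φ ⊤ (volume : Measure ℝ)) (C : ℝ) (hC : 0 ≤ C)
    (hb : ∀ ω, ‖φ ω‖ ≤ C) (g : L2) : ‖mulL2 φ hφ g‖ ≤ C * ‖g‖ := by
  rw [mulL2, Lp.norm_toLp]
  have h1 : eLpNorm (φ • (g : ℝ → ℂ)) 2 volume ≤ eLpNorm (C • (g : ℝ → ℂ)) 2 volume := by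
    apply eLpNorm_mono
    intro x
    show ‖φ x * (g : ℝ → ℂ) x‖ ≤ ‖C • (g : ℝ → ℂ) x‖
    rw [norm_mul, norm_smul, Real.norm_eq_abs, _root_.abs_of_nonneg hC]
    exact mul_le_mul_of_nonneg_right (hb x) (norm_nonneg _)
  have h2 : eLpNorm (C • (g : ℝ → ℂ)) 2 volume ≤ ‖C‖₊ • eLpNorm (g : ℝ → ℂ) 2 volume :=
    eLpNorm_const_smul_le
  have h3 : eLpNorm (φ • (g : ℝ → ℂ)) 2 volume ≤ ‖C‖₊ * eLpNorm (g : ℝ → ℂ) 2 volume :=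
    h1.trans (by simpa [ENNReal.smul_def] using h2)
  have hfin : (‖C‖₊ : ℝ≥0∞) * eLpNorm (g : ℝ → ℂ) 2 volume ≠ ∞ :=
    ENNReal.mul_ne_top ENNReal.coe_ne_top (Lp.eLpNorm_ne_top g)
  calc (eLpNorm (φ • (g : ℝ → ℂ)) 2 volume).toReal
      ≤ ((‖C‖₊ : ℝ≥0∞) * eLpNorm (g : ℝ → ℂ) 2 volume).toReal := ENNReal.toReal_mono hfin h3
    _ = C * ‖g‖ := by
        rw [ENNReal.toReal_mul, ENNReal.coe_toReal, coe_nnnorm, Real.norm_eq_abs,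
          _root_.abs_of_nonneg hC, Lp.norm_def]

lemma lipschitz_mulL2 (φ : ℝ → ℂ) (hφ : MemLp φ ⊤ (volume : Measure ℝ)) (C : ℝ) (hC : 0 ≤ C)
    (hb : ∀ ω, ‖φ ω‖ ≤ C) : LipschitzWith C.toNNReal (mulL2 φ hφ) := by
  apply LipschitzWith.of_dist_le_mul
  intro g₁ g₂
  rw [dist_eq_norm, ← mulL2_sub, dist_eq_norm]
  simpa [Real.coe_toNNReal C hC] using norm_mulL2_le φ hφ C hC hb (g₁ - g₂)

/-- The modulation `ω ↦ e^{-2πiaω}`. -/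
def expc (a : ℝ) : ℝ → ℂ := fun ω => Complex.exp (↑(-2 * π * a * ω) * Complex.I)

lemma expc_norm (a ω : ℝ) : ‖expc a ω‖ = 1 := norm_exp_ofReal_mul_I _

lemma expc_continuous (a : ℝ) : Continuous (expc a) :=
  Complex.continuous_exp.comp ((Complex.continuous_ofReal.comp (by continuity)).mul
    continuous_const)

lemma expc_mem (a : ℝ) : MemLp (expc a) ⊤ (volume : Measure ℝ) :=
  memLp_top_of_bound (expc_continuous a).aestronglyMeasurable 1
    (Filter.Eventually.of_forall fun ω => le_of_eq (expc_norm a ω))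

lemma integrable_of_simpleFunc (g : L2)
    (hg : g ∈ (Lp.simpleFunc ℂ 2 (volume : Measure ℝ) : Set L2)) :
    Integrable (g : ℝ → ℂ) volume := by
  obtain ⟨s, hs⟩ := hg
  have hae : (g : ℝ → ℂ) =ᵐ[volume] s := by
    rw [← hs]
    exact AEEqFun.coeFn_mk _ _
  have hmem : MemLp (s : ℝ → ℂ) 2 volume := (memLp_congr_ae hae).1 (Lp.memLp g)
  have hint : Integrable (s : ℝ → ℂ) volume :=
    (SimpleFunc.memLp_iff_integrable (by norm_num) (by norm_num)).1 hmem
  exact hint.congr hae.symm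

lemma F_Tr_integrable (F : L2 ≃ₗᵢ[ℂ] L2) (hF : IsFourierTransform F) (a : ℝ) (g : L2)
    (hg : Integrable (g : ℝ → ℂ) volume) :
    F (Tr a g) = mulL2 (expc a) (expc_mem a) (F g) := by
  apply Lp.ext
  have hTr : (Tr a g : ℝ → ℂ) =ᵐ[volume] (g : ℝ → ℂ) ∘ (fun x => x - a) :=
    Lp.coeFn_compMeasurePreserving g _
  have hci : Integrable ((g : ℝ → ℂ) ∘ (fun x => x - a)) volume :=
    ((measurePreserving_sub_right volume a).integrable_comp hg.1).2 hg
  have hTrInt : Integrable (Tr a g : ℝ → ℂ) volume := hci.congr hTr.symm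
  have h1 := hF _ hTrInt
  have h2 := hF g hg
  have h3 : 𝓕 (Tr a g : ℝ → ℂ) = 𝓕 ((g : ℝ → ℂ) ∘ (fun x => x - a)) := by
    funext w
    rw [Real.fourier_real_eq_integral_exp_smul,
      Real.fourier_real_eq_integral_exp_smul]
    exact integral_congr_ae (hTr.mono fun x hx => by dsimp only; rw [hx])
  have h4 : ∀ w, 𝓕 ((g : ℝ → ℂ) ∘ (fun x => x - a)) w = expc a w * 𝓕 (g : ℝ → ℂ) w := by
    intro w
    rw [Real.fourier_real_eq_integral_exp_smul,
      Real.fourier_real_eq_integral_exp_smul]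
    have h5 : (∫ v : ℝ, Complex.exp (↑(-2 * π * v * w) * Complex.I) •
          ((g : ℝ → ℂ) ∘ (fun x => x - a)) v)
        = ∫ v : ℝ, Complex.exp (↑(-2 * π * (v + a) * w) * Complex.I) • (g : ℝ → ℂ) v := by
      rw [← integral_sub_right_eq_self (μ := volume)
        (fun v => Complex.exp (↑(-2 * π * (v + a) * w) * Complex.I) • (g : ℝ → ℂ) v) a]
      congr 1
      funext x
      simp only [Function.comp_apply, sub_add_cancel]
    rw [h5]
    have h6 : ∀ v : ℝ, Complex.exp (↑(-2 * π * (v + a) * w) * Complex.I)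
        = expc a w * Complex.exp (↑(-2 * π * v * w) * Complex.I) := by
      intro v
      rw [expc, ← Complex.exp_add]
      congr 1
      push_cast
      ring
    calc ∫ v : ℝ, Complex.exp (↑(-2 * π * (v + a) * w) * Complex.I) • (g : ℝ → ℂ) v
        = ∫ v : ℝ, expc a w * (Complex.exp (↑(-2 * π * v * w) * Complex.I) • (g : ℝ → ℂ) v) := by
          congr 1
          funext v
          rw [h6 v, smul_eq_mul, smul_eq_mul, mul_assoc]
      _ = expc a w * ∫ v : ℝ, Complex.exp (↑(-2 * π * v * w) * Complex.I) • (g : ℝ → ℂ) v :=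
          integral_const_mul _ _
  filter_upwards [h1, coeFn_mulL2 (expc a) (expc_mem a) (F g), h2] with ω hω1 hω2 hω3
  rw [hω1, h3, h4, hω2, hω3]

lemma F_Tr (F : L2 ≃ₗᵢ[ℂ] L2) (hF : IsFourierTransform F) (a : ℝ) (g : L2) :
    F (Tr a g) = mulL2 (expc a) (expc_mem a) (F g) := by
  have hd : Dense (Lp.simpleFunc ℂ 2 (volume : Measure ℝ) : Set L2) :=
    Lp.simpleFunc.dense (by norm_num)
  have hcont1 : Continuous fun g : L2 => F (Tr a g) := by
    have hiso : Isometry (Tr a) := Lp.isometry_compMeasurePreserving _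
    exact F.continuous.comp hiso.continuous
  have hcont2 : Continuous fun g : L2 => mulL2 (expc a) (expc_mem a) (F g) :=
    ((lipschitz_mulL2 (expc a) (expc_mem a) 1 zero_le_one
      (fun ω => le_of_eq (expc_norm a ω))).continuous).comp F.continuous
  exact congrFun (Continuous.ext_on hd hcont1 hcont2
    (fun g hg => F_Tr_integrable F hF a g (integrable_of_simpleFunc g hg))) g

/-- A continuous function on the circle, viewed as a `1`-periodic function on `ℝ`. -/
def perFun (φ : C(AddCircle (1 : ℝ), ℂ)) : ℝ → ℂ := fun ω => φ (ω : AddCircle (1 : ℝ))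

lemma perFun_continuous (φ : C(AddCircle (1 : ℝ), ℂ)) : Continuous (perFun φ) :=
  φ.continuous.comp (AddCircle.continuous_mk' 1)

lemma perFun_memtop (φ : C(AddCircle (1 : ℝ), ℂ)) : MemLp (perFun φ) ⊤ (volume : Measure ℝ) :=
  memLp_top_of_bound (perFun_continuous φ).aestronglyMeasurable ‖φ‖
    (Filter.Eventually.of_forall fun ω => φ.norm_coe_le_norm _)

/-- Multiplication by a continuous `1`-periodic function. -/
def Psi (g : L2) (φ : C(AddCircle (1 : ℝ), ℂ)) : L2 := mulL2 (perFun φ) (perFun_memtop φ) g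

/-- `Psi g` as a continuous linear map. -/
def PsiC (g : L2) : C(AddCircle (1 : ℝ), ℂ) →L[ℂ] L2 :=
  LinearMap.mkContinuous
    { toFun := fun φ => Psi g φ
      map_add' := fun φ ψ => by
        show mulL2 (perFun (φ + ψ)) (perFun_memtop _) g = Psi g φ + Psi g ψ
        rw [mulL2_congr (perFun (φ + ψ)) (fun ω => perFun φ ω + perFun ψ ω) (perFun_memtop _)
          ((perFun_memtop φ).add (perFun_memtop ψ)) g (by funext ω; simp [perFun])]
        exact mulL2_add' _ _ _ _ _ g
      map_smul' := fun c φ => by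
        show mulL2 (perFun (c • φ)) (perFun_memtop _) g = c • Psi g φ
        rw [mulL2_congr (perFun (c • φ)) (fun ω => c * perFun φ ω) (perFun_memtop _)
          ((perFun_memtop φ).const_mul c) g (by funext ω; simp [perFun])]
        exact mulL2_smul' c _ _ _ g }
    ‖g‖ (fun φ => by rw [mul_comm]; exact norm_mulL2_le (perFun φ) (perFun_memtop φ) ‖φ‖ (norm_nonneg φ) (fun ω => φ.norm_coe_le_norm _) g)

lemma Psi_mem (V : Submodule ℂ L2) (hV : IsClosed (V : Set L2)) (g : L2)
    (hfour : ∀ m : ℤ, Psi g (fourier m) ∈ V) (φ : C(AddCircle (1 : ℝ), ℂ)) : Psi g φ ∈ V := by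
  haveI : Fact (0 < (1 : ℝ)) := ⟨one_pos⟩
  set W : Submodule ℂ C(AddCircle (1 : ℝ), ℂ) := V.comap ((PsiC g) : C(AddCircle (1 : ℝ), ℂ) →ₗ[ℂ] L2) with hW
  have hWclosed : IsClosed (W : Set C(AddCircle (1 : ℝ), ℂ)) := by
    have : (W : Set C(AddCircle (1 : ℝ), ℂ)) = (PsiC g) ⁻¹' (V : Set L2) := rfl
    rw [this]
    exact hV.preimage (PsiC g).continuous
  have hle : Submodule.span ℂ (Set.range (@fourier 1)) ≤ W := by
    rw [Submodule.span_le]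
    rintro _ ⟨m, rfl⟩
    exact hfour m
  have htop : (⊤ : Submodule ℂ C(AddCircle (1 : ℝ), ℂ)) ≤ W := by
    rw [← span_fourier_closure_eq_top]
    exact Submodule.topologicalClosure_minimal _ hle hWclosed
  exact htop (Submodule.mem_top (x := φ)) 

/-- The `1`-periodic function agreeing with `e^{-2πijω/n}` on `B_k`. -/
def mfun (n k : ℕ) (j : ℤ) : ℝ → ℂ :=
  fun ω => Complex.exp (↑(-(2 * π * j * (k + Int.fract ω)) / n) * Complex.I)

lemma mfun_norm (n k : ℕ) (j : ℤ) (ω : ℝ) : ‖mfun n k j ω‖ = 1 := norm_exp_ofReal_mul_I _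

lemma mfun_measurable (n k : ℕ) (j : ℤ) : Measurable (mfun n k j) := by
  apply Complex.continuous_exp.measurable.comp
  apply Measurable.mul_const
  exact Complex.measurable_ofReal.comp
    ((((measurable_const.add measurable_fract).const_mul _).neg).div_const _)

lemma mfun_memtop (n k : ℕ) (j : ℤ) : MemLp (mfun n k j) ⊤ (volume : Measure ℝ) :=
  memLp_top_of_bound (mfun_measurable n k j).aestronglyMeasurable 1
    (Filter.Eventually.of_forall fun ω => le_of_eq (mfun_norm n k j ω))

/-- Piecewise-linear reparametrization used to build continuous approximations. -/
def theta (n N : ℕ) (t : ℝ) : ℝ := t + ((n : ℝ) - 1) * (N + 1) * max 0 (t - (1 - 1 / (N + 1)))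

lemma theta_continuous (n N : ℕ) : Continuous (theta n N) :=
  continuous_id.add (continuous_const.mul (continuous_const.max
    (continuous_id.sub continuous_const)))

lemma theta_eq_self {n N : ℕ} {t : ℝ} (ht : t ≤ 1 - 1 / (N + 1)) : theta n N t = t := by
  rw [theta, max_eq_left (by linarith), mul_zero, add_zero]

lemma one_div_succ_le_one (N : ℕ) : (1 : ℝ) / (N + 1) ≤ 1 := by
  rw [div_le_one (by positivity)]
  have : (0:ℝ) ≤ N := Nat.cast_nonneg N
  linarith

lemma theta_zero (n N : ℕ) : theta n N 0 = 0 := theta_eq_self (by linarith [one_div_succ_le_one N])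

lemma theta_one (n N : ℕ) : theta n N 1 = n := by
  rw [theta]
  have h1 : (1:ℝ) - (1 - 1 / (N + 1)) = 1 / (N + 1) := by ring
  rw [h1, max_eq_right (by positivity)]
  have hN : ((N:ℝ) + 1) ≠ 0 := by positivity
  field_simp
  ring

/-- Continuous approximation to `mfun`. -/
def gfun (n k : ℕ) (j : ℤ) (N : ℕ) : ℝ → ℂ :=
  fun t => Complex.exp (↑(-(2 * π * j * (k + theta n N t)) / n) * Complex.I)

lemma gfun_norm (n k : ℕ) (j : ℤ) (N : ℕ) (t : ℝ) : ‖gfun n k j N t‖ = 1 :=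
  norm_exp_ofReal_mul_I _

lemma gfun_continuous (n k : ℕ) (j : ℤ) (N : ℕ) : Continuous (gfun n k j N) :=
  Complex.continuous_exp.comp ((Complex.continuous_ofReal.comp
    (((continuous_const.mul (continuous_const.add (theta_continuous n N))).neg).div_const _)).mul
    continuous_const)

lemma gfun_period (n k : ℕ) (j : ℤ) (N : ℕ) (hn : 0 < n) :
    gfun n k j N 0 = gfun n k j N 1 := by
  simp only [gfun]
  rw [theta_zero, theta_one]
  rw [show (↑(-(2 * π * (j:ℝ) * ((k:ℝ) + (n:ℝ))) / n) * Complex.I : ℂ)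
      = ↑(-(2 * π * (j:ℝ) * ((k:ℝ) + 0)) / n) * Complex.I + (-j : ℤ) * (2 * ↑π * Complex.I)
      from ?_, Complex.exp_add, Complex.exp_int_mul_two_pi_mul_I, mul_one]
  have hn' : ((n:ℂ)) ≠ 0 := by
    exact_mod_cast Nat.cast_ne_zero.2 hn.ne'
  push_cast
  field_simp
  ring

/-- The continuous periodic approximation on the circle. -/
def phiN (n k : ℕ) (j : ℤ) (N : ℕ) (hn : 0 < n) : C(AddCircle (1 : ℝ), ℂ) :=
  ⟨AddCircle.liftIco 1 0 (gfun n k j N),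
    AddCircle.liftIco_zero_continuous (by simpa using gfun_period n k j N hn)
      ((gfun_continuous n k j N).continuousOn)⟩

lemma coe_fract (ω : ℝ) : ((ω : ℝ) : AddCircle (1 : ℝ)) = ((Int.fract ω : ℝ) : AddCircle (1 : ℝ)) := by
  have h0 : (((⌊ω⌋ : ℝ)) : AddCircle (1 : ℝ)) = 0 := by
    rw [AddCircle.coe_eq_zero_iff]
    exact ⟨⌊ω⌋, by simp⟩
  calc ((ω : ℝ) : AddCircle (1 : ℝ))
      = ((Int.fract ω + (⌊ω⌋ : ℝ) : ℝ) : AddCircle (1 : ℝ)) := by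
        rw [Int.fract_add_floor]
    _ = ((Int.fract ω : ℝ) : AddCircle (1 : ℝ)) + (((⌊ω⌋ : ℝ)) : AddCircle (1 : ℝ)) := by
        push_cast
        rfl
    _ = ((Int.fract ω : ℝ) : AddCircle (1 : ℝ)) := by rw [h0, add_zero]

lemma phiN_coe (n k : ℕ) (j : ℤ) (N : ℕ) (hn : 0 < n) (ω : ℝ) :
    perFun (phiN n k j N hn) ω = gfun n k j N (Int.fract ω) := by
  show AddCircle.liftIco 1 0 (gfun n k j N) (ω : AddCircle (1:ℝ)) = _
  rw [coe_fract]
  exact AddCircle.liftIco_zero_coe_apply ⟨Int.fract_nonneg ω, Int.fract_lt_one ω⟩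

lemma phiN_eq (n k : ℕ) (j : ℤ) (N : ℕ) (hn : 0 < n) (ω : ℝ)
    (h : Int.fract ω ≤ 1 - 1 / (N + 1)) :
    perFun (phiN n k j N hn) ω = mfun n k j ω := by
  rw [phiN_coe]
  simp only [gfun, mfun]
  rw [theta_eq_self h]

lemma coeFn_Psi (g : L2) (φ : C(AddCircle (1 : ℝ), ℂ)) :
    (Psi g φ : ℝ → ℂ) =ᵐ[volume] fun ω => perFun φ ω * (g : ℝ → ℂ) ω :=
  coeFn_mulL2 (perFun φ) (perFun_memtop φ) g

lemma tendsto_Psi (n k : ℕ) (hn : 0 < n) (j : ℤ) (g : L2) :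
    Filter.Tendsto (fun N => Psi g (phiN n k j N hn)) atTop
      (𝓝 (mulL2 (mfun n k j) (mfun_memtop n k j) g)) := by
  rw [Lp.tendsto_Lp_iff_tendsto_eLpNorm']
  set u : ℕ → ℝ → ℂ :=
    fun N ω => (perFun (phiN n k j N hn) ω - mfun n k j ω) * (g : ℝ → ℂ) ω with hu
  have hcongr : ∀ N, eLpNorm ((Psi g (phiN n k j N hn) : ℝ → ℂ)
        - (mulL2 (mfun n k j) (mfun_memtop n k j) g : ℝ → ℂ)) 2 volume
      = eLpNorm (u N) 2 volume := by
    intro N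
    apply eLpNorm_congr_ae
    filter_upwards [coeFn_Psi g (phiN n k j N hn),
      coeFn_mulL2 (mfun n k j) (mfun_memtop n k j) g] with ω h1 h2
    rw [Pi.sub_apply, h1, h2, hu]
    ring
  have hbound_ptwise : ∀ N ω, ‖u N ω‖ ≤ 2 * ‖(g : ℝ → ℂ) ω‖ := by
    intro N ω
    rw [hu]
    simp only [norm_mul]
    apply mul_le_mul_of_nonneg_right _ (norm_nonneg _)
    calc ‖perFun (phiN n k j N hn) ω - mfun n k j ω‖
        ≤ ‖perFun (phiN n k j N hn) ω‖ + ‖mfun n k j ω‖ := norm_sub_le _ _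
      _ = 2 := by rw [phiN_coe, gfun_norm, mfun_norm]; norm_num
  have hLg : (∫⁻ ω, (‖(g : ℝ → ℂ) ω‖₊ : ℝ≥0∞) ^ (2:ℝ) ∂volume) ≠ ∞ := by
    intro hL
    have h := Lp.eLpNorm_ne_top g
    rw [eLpNorm_eq_lintegral_rpow_enorm_toReal (by norm_num) (by norm_num)] at h
    simp only [enorm_eq_nnnorm] at h
    apply h
    have h2 : (2 : ℝ≥0∞).toReal = (2:ℝ) := by norm_num
    rw [h2, hL, ENNReal.top_rpow_of_pos (by norm_num)]
  have hL : Filter.Tendsto (fun N => ∫⁻ ω, (‖u N ω‖₊ : ℝ≥0∞) ^ (2:ℝ) ∂volume) atTop (𝓝 0) := by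
    have h0 : (0:ℝ≥0∞) = ∫⁻ (_ : ℝ), 0 ∂volume := by simp
    rw [h0]
    apply tendsto_lintegral_of_dominated_convergence'
      (bound := fun ω => 4 * (‖(g : ℝ → ℂ) ω‖₊ : ℝ≥0∞) ^ (2:ℝ))
    · intro N
      have hmeas : AEMeasurable (u N) volume := by
        have h1 : Measurable (fun ω => perFun (phiN n k j N hn) ω - mfun n k j ω) :=
          (perFun_continuous _).measurable.sub (mfun_measurable n k j)
        exact h1.aemeasurable.mul (Lp.aestronglyMeasurable g).aemeasurable
      exact ENNReal.continuous_rpow_const.measurable.comp_aemeasurable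
        hmeas.aestronglyMeasurable.enorm
    · intro N
      filter_upwards with ω
      have h1 : (‖u N ω‖₊ : ℝ≥0∞) ≤ 2 * ‖(g : ℝ → ℂ) ω‖₊ := by
        have := hbound_ptwise N ω
        have h2 : ‖u N ω‖₊ ≤ 2 * ‖(g : ℝ → ℂ) ω‖₊ := by
          rw [← NNReal.coe_le_coe]
          push_cast
          simpa using this
        exact_mod_cast h2
      calc (‖u N ω‖₊ : ℝ≥0∞) ^ (2:ℝ)
          ≤ (2 * (‖(g : ℝ → ℂ) ω‖₊ : ℝ≥0∞)) ^ (2:ℝ) :=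
            ENNReal.rpow_le_rpow h1 (by norm_num)
        _ = (2:ℝ≥0∞) ^ (2:ℝ) * (‖(g : ℝ → ℂ) ω‖₊ : ℝ≥0∞) ^ (2:ℝ) :=
            ENNReal.mul_rpow_of_nonneg _ _ (by norm_num)
        _ = 4 * (‖(g : ℝ → ℂ) ω‖₊ : ℝ≥0∞) ^ (2:ℝ) := by
            congr 1
            rw [show (2:ℝ) = ((2:ℕ):ℝ) by norm_num, ENNReal.rpow_natCast]
            norm_num
    · rw [lintegral_const_mul' _ _ (by norm_num)]
      exact ENNReal.mul_ne_top (by norm_num) hLg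
    · filter_upwards with ω
      obtain ⟨N₀, hN₀⟩ := exists_nat_one_div_lt
        (show (0:ℝ) < 1 - Int.fract ω by linarith [Int.fract_lt_one ω])
      apply tendsto_atTop_of_eventually_const (i₀ := N₀)
      intro N hN
      have hfr : Int.fract ω ≤ 1 - 1 / (N + 1) := by
        have h1 : (1:ℝ) / (N + 1) ≤ 1 / (N₀ + 1) := by
          apply one_div_le_one_div_of_le (by positivity)
          have : (N₀:ℝ) ≤ N := by exact_mod_cast hN
          linarith
        linarith
      have : u N ω = 0 := by
        rw [hu]
        simp only [phiN_eq n k j N hn ω hfr, sub_self, zero_mul]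
      rw [this]
      simp only [nnnorm_zero, ENNReal.coe_zero]
      exact ENNReal.zero_rpow_of_pos (by norm_num)
  have hfin : Filter.Tendsto (fun N => eLpNorm (u N) 2 volume) atTop (𝓝 0) := by
    have h2 : ∀ N, eLpNorm (u N) 2 volume
        = (∫⁻ ω, (‖u N ω‖₊ : ℝ≥0∞) ^ (2:ℝ) ∂volume) ^ (1/(2:ℝ)) := by
      intro N
      rw [eLpNorm_eq_lintegral_rpow_enorm_toReal (by norm_num) (by norm_num)]
      simp only [enorm_eq_nnnorm]
      norm_num
    simp only [h2]
    have := (ENNReal.continuous_rpow_const (y := 1/(2:ℝ))).tendsto 0 |>.comp hL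
    simpa [Function.comp_def, ENNReal.zero_rpow_of_pos] using this
  exact (Filter.tendsto_congr fun N => hcongr N).2 hfin

end Stmt11Aux

open Stmt11Aux

/-- If every `f ∈ S` has `supp f̂ ⊆ B_k` for one fixed `k`, then the SIS `S` is
`(1/n)ℤ`-invariant. -/
theorem stmt11 (F : L2 ≃ₗᵢ[ℂ] L2) (hF : IsFourierTransform F)
    (n : ℕ) (hn : 0 < n)
    (S : Submodule ℂ L2) (hS : IsClosed (S : Set L2))
    (hinv : ∀ f ∈ S, ∀ j : ℤ, Tr (j : ℝ) f ∈ S)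
    (k : ℕ) (hk : k < n)
    (hsupp : ∀ f ∈ S, ∀ᵐ ω ∂(volume : Measure ℝ), ω ∉ Bset n k → (F f : ℝ → ℂ) ω = 0) :
    ∀ f ∈ S, ∀ j : ℤ, Tr ((j : ℝ) / n) f ∈ S := by
  intro f hf j
  haveI : Fact (0 < (1:ℝ)) := ⟨one_pos⟩
  set V : Submodule ℂ L2 := S.map (F.toLinearEquiv : L2 →ₗ[ℂ] L2) with hV
  have hVclosed : IsClosed (V : Set L2) := by
    have hset : (V : Set L2) = ⇑(F.symm) ⁻¹' (S : Set L2) := by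
      ext x
      simp only [hV, SetLike.mem_coe, Set.mem_preimage]
      rw [Submodule.mem_map_equiv]
      rfl
    rw [hset]
    exact hS.preimage F.symm.continuous
  have hmemV : ∀ g ∈ S, F g ∈ V := fun g hg => Submodule.mem_map_of_mem hg
  have hfour : ∀ m : ℤ, Psi (F f) (fourier m) ∈ V := by
    intro m
    have h1 : Psi (F f) (fourier m) = F (Tr (-(m:ℝ)) f) := by
      rw [F_Tr F hF (-(m:ℝ)) f]
      refine mulL2_congr (perFun (fourier m)) (expc (-(m:ℝ))) (perFun_memtop _)
        (expc_mem _) (F f) ?_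
      funext ω
      rw [perFun, fourier_coe_apply, expc]
      congr 1
      push_cast
      ring
    rw [h1]
    have hmem := hinv f hf (-m)
    rw [Int.cast_neg] at hmem
    exact hmemV _ hmem
  have hlim : mulL2 (mfun n k j) (mfun_memtop n k j) (F f) ∈ V :=
    hVclosed.mem_of_tendsto (tendsto_Psi n k hn j (F f))
      (Filter.Eventually.of_forall fun N =>
        Psi_mem V hVclosed (F f) hfour (phiN n k j N hn))
  have heq : F (Tr ((j:ℝ)/n) f) = mulL2 (mfun n k j) (mfun_memtop n k j) (F f) := by
    rw [F_Tr F hF ((j:ℝ)/n) f]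
    apply MeasureTheory.Lp.ext
    filter_upwards [coeFn_mulL2 (expc ((j:ℝ)/n)) (expc_mem _) (F f),
      coeFn_mulL2 (mfun n k j) (mfun_memtop n k j) (F f), hsupp f hf] with ω h1 h2 h3
    rw [h1, h2]
    by_cases hmem : ω ∈ Bset n k
    · congr 1
      obtain ⟨t, ht⟩ := hmem
      have ht1 : (k:ℝ) ≤ ω - n * t := ht.1
      have ht2 : ω - n * t < k + 1 := ht.2
      have hfr : Int.fract ω = ω - n * t - k := by
        have harg : (ω - n * t - k) + ((n * t + k : ℤ) : ℝ) = ω := by push_cast; ring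
        calc Int.fract ω
            = Int.fract ((ω - n * t - k) + ((n * t + k : ℤ) : ℝ)) := by rw [harg]
          _ = Int.fract (ω - n * t - k) := Int.fract_add_intCast _ _
          _ = ω - n * t - k := Int.fract_eq_self.2 ⟨by linarith, by linarith⟩
      show expc ((j:ℝ)/n) ω = mfun n k j ω
      rw [expc, mfun, hfr]
      rw [show (↑(-2 * Real.pi * ((j:ℝ)/n) * ω) * Complex.I : ℂ)
          = ↑(-(2 * Real.pi * (j:ℝ) * ((k:ℝ) + (ω - n * t - k))) / n) * Complex.I
            + (-(j * t) : ℤ) * (2 * ↑Real.pi * Complex.I) from ?_,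
        Complex.exp_add, Complex.exp_int_mul_two_pi_mul_I, mul_one]
      have hn' : ((n:ℂ)) ≠ 0 := by exact_mod_cast Nat.cast_ne_zero.2 hn.ne'
      push_cast
      field_simp
      ring
    · rw [h3 hmem, mul_zero, mul_zero]
  have hVmem : F (Tr ((j:ℝ)/n) f) ∈ V := heq ▸ hlim
  rw [hV, Submodule.mem_map] at hVmem
  obtain ⟨y, hyS, hy⟩ := hVmem
  have hy' : y = Tr ((j:ℝ)/n) f := F.injective hy
  exact hy' ▸ hyS

end
end

section
/- Let S be a (1/n)ℤ-invariant shift-invariant subspace of L²(ℝ), F ⊆ S such that the integer translates {T_j f : f ∈ F, j ∈ ℤ} form a frame for S with bounds A, B. Let P_k be the orthogonal projection onto functions with Fourier support in B_k = ⋃_{j∈ℤ}([k,k+1)+nj). Then {T_j P_k f : f ∈ F, j ∈ ℤ, k=0,…,n−1} is a frame for S with the same bounds A, B. -/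
open MeasureTheory FourierTransform

noncomputable section

namespace Aux

lemma mem_Bset_iff {n k : ℕ} {ω : ℝ} : ω ∈ Bset n k ↔ ∃ j : ℤ, ⌊ω⌋ = k + n * j := by
  unfold Bset
  constructor
  · rintro ⟨j, h1, h2⟩
    refine ⟨j, ?_⟩
    have : ((k : ℤ) + n * j : ℤ) = ⌊ω⌋ := by
      symm
      rw [Int.floor_eq_iff]
      constructor
      · push_cast; linarith
      · push_cast; push_cast at h2; linarith
    omega
  · rintro ⟨j, h⟩
    refine ⟨j, ?_, ?_⟩
    · have h1 : ((k : ℤ) + n * j : ℝ) ≤ ω := by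
        rw [show ((k:ℤ) + n*j : ℝ) = ((⌊ω⌋ : ℤ) : ℝ) by rw [h]; push_cast; ring]
        exact Int.floor_le ω
      push_cast at h1 ⊢; linarith
    · have h2 : ω < ((⌊ω⌋ : ℤ) : ℝ) + 1 := Int.lt_floor_add_one ω
      rw [h] at h2; push_cast at h2 ⊢; linarith

lemma mem_Bset_iff_emod {n k : ℕ} (hk : k < n) {ω : ℝ} :
    ω ∈ Bset n k ↔ (k : ℤ) = ⌊ω⌋ % n := by
  have hn0 : 0 < (n : ℤ) := by exact_mod_cast Nat.pos_of_ne_zero (by omega)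
  rw [mem_Bset_iff]
  constructor
  · rintro ⟨j, hj⟩
    rw [hj]
    rw [Int.add_mul_emod_self_left]
    symm
    exact Int.emod_eq_of_lt (by positivity) (by exact_mod_cast hk)
  · intro h
    exact ⟨⌊ω⌋ / n, by rw [h]; rw [Int.emod_def]; ring⟩

lemma measurableSet_Bset (n k : ℕ) : MeasurableSet (Bset n k) := by
  have : Bset n k = ⋃ j : ℤ, (fun ω : ℝ => ω - n * j) ⁻¹' Set.Ico (k : ℝ) ((k : ℝ) + 1) := by
    ext ω; simp only [Bset, Set.mem_setOf_eq, Set.mem_iUnion, Set.mem_preimage, Set.mem_Ico]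
  rw [this]
  exact MeasurableSet.iUnion fun j =>
    (measurableSet_Ico).preimage (measurable_id.sub_const _)

lemma Bset_nonempty (n k : ℕ) : ((k : ℝ)) ∈ Bset n k := ⟨0, by simp⟩

lemma add_mem_Bset {n k : ℕ} {ω : ℝ} (h : ω ∈ Bset n k) : ω + n ∈ Bset n k := by
  obtain ⟨j, hj⟩ := h
  exact ⟨j + 1, by push_cast; constructor <;> [skip; skip] <;> obtain ⟨a,b⟩ := hj <;> push_cast at a b <;> linarith⟩

lemma sub_mem_Bset {n k : ℕ} {ω : ℝ} (h : ω ∈ Bset n k) : ω - n ∈ Bset n k := by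
  obtain ⟨j, hj⟩ := h
  exact ⟨j - 1, by push_cast; constructor <;> [skip; skip] <;> obtain ⟨a,b⟩ := hj <;> push_cast at a b <;> linarith⟩


def modFn (a : ℝ) (ω : ℝ) : ℂ := (Real.fourierChar (-(a * ω)) : ℂ)

lemma norm_modFn (a ω : ℝ) : ‖modFn a ω‖ = 1 := norm_eq_of_mem_sphere _

lemma continuous_modFn (a : ℝ) : Continuous (modFn a) := by
  have : Continuous fun ω : ℝ => Real.fourierChar (-(a * ω)) :=
    Real.continuous_fourierChar.comp (by continuity)
  exact continuous_induced_dom.comp this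

lemma memMul {φ : ℝ → ℂ} (hm : AEStronglyMeasurable φ volume) {C : ℝ}
    (hC : ∀ ω, ‖φ ω‖ ≤ C) (u : L2) :
    MemLp (fun ω => φ ω * (u : ℝ → ℂ) ω) 2 volume :=
  (Lp.memLp u).of_le_mul (hm.mul (Lp.memLp u).1)
    (Filter.Eventually.of_forall fun ω => by
      rw [norm_mul]; exact mul_le_mul_of_nonneg_right (hC ω) (norm_nonneg _))

def modLp (a : ℝ) (u : L2) : L2 :=
  (memMul (continuous_modFn a).aestronglyMeasurable (C := 1)
    (fun ω => le_of_eq (norm_modFn a ω)) u).toLp _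

lemma coeFn_modLp (a : ℝ) (u : L2) :
    (modLp a u : ℝ → ℂ) =ᵐ[volume] fun ω => modFn a ω * (u : ℝ → ℂ) ω :=
  MemLp.coeFn_toLp _

lemma eLpNorm_mul_modFn (a : ℝ) (h : ℝ → ℂ) :
    eLpNorm (fun ω => modFn a ω * h ω) 2 volume = eLpNorm h 2 volume :=
  le_antisymm
    (eLpNorm_mono_ae (Filter.Eventually.of_forall fun ω => by
      rw [norm_mul, norm_modFn, one_mul]))
    (eLpNorm_mono_ae (Filter.Eventually.of_forall fun ω => by
      rw [norm_mul, norm_modFn, one_mul]))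

lemma norm_modLp_sub (a : ℝ) (u v : L2) : ‖modLp a u - modLp a v‖ = ‖u - v‖ := by
  rw [Lp.norm_def, Lp.norm_def]
  congr 1
  have h1 : ((modLp a u - modLp a v : L2) : ℝ → ℂ) =ᵐ[volume]
      fun ω => modFn a ω * ((u : ℝ → ℂ) ω - (v : ℝ → ℂ) ω) := by
    filter_upwards [Lp.coeFn_sub (modLp a u) (modLp a v), coeFn_modLp a u, coeFn_modLp a v]
      with ω h hu hv
    simp only [Pi.sub_apply] at h
    rw [h, hu, hv]; ring
  have h2 : ((u - v : L2) : ℝ → ℂ) =ᵐ[volume] fun ω => (u : ℝ → ℂ) ω - (v : ℝ → ℂ) ω := by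
    filter_upwards [Lp.coeFn_sub u v] with ω h
    simpa using h
  rw [eLpNorm_congr_ae h1, eLpNorm_congr_ae h2, eLpNorm_mul_modFn]

lemma fourierIntegral_congr_ae {u v : ℝ → ℂ} (h : u =ᵐ[volume] v) : 𝓕 u = 𝓕 v := by
  funext w
  rw [Real.fourier_eq, Real.fourier_eq]
  exact integral_congr_ae (by filter_upwards [h] with x hx; rw [hx])

lemma fourierIntegral_translate {g : ℝ → ℂ} (a : ℝ) :
    𝓕 (fun x => g (x - a)) = fun w => modFn a w * 𝓕 g w := by
  have h := VectorFourier.fourierIntegral_comp_add_right (E := ℂ) (Real.fourierChar) volume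
    (innerₗ ℝ) g (-a)
  have hfun : (g ∘ fun v => v + -a) = fun x => g (x - a) := by
    funext x; simp [sub_eq_add_neg]
  rw [hfun] at h
  have : 𝓕 (fun x => g (x - a)) = fun w =>
      (Real.fourierChar ((innerₗ ℝ) (-a) w) : ℂ) • 𝓕 g w := h
  rw [this]
  funext w
  have hL : (innerₗ ℝ) (-a) w = -(a * w) := by
    simp only [innerₗ_apply_apply, RCLike.inner_apply, starRingEnd_apply, star_trivial, neg_mul]; ring
  rw [hL]
  simp [modFn, Circle.smul_def]

lemma Tr_map_sub (a : ℝ) (u v : L2) : Tr a (u - v) = Tr a u - Tr a v :=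
  map_sub (Lp.compMeasurePreserving (fun x => x - a) (measurePreserving_sub_right volume a)) u v

lemma norm_Tr (a : ℝ) (u : L2) : ‖Tr a u‖ = ‖u‖ :=
  Lp.norm_compMeasurePreserving u _

theorem F_Tr (F : L2 ≃ₗᵢ[ℂ] L2) (hF : IsFourierTransform F) (a : ℝ) (f : L2) :
    F (Tr a f) = modLp a (F f) := by
  -- key case: continuous compactly supported
  have key : ∀ (g : ℝ → ℂ), Continuous g → HasCompactSupport g →
      ∀ (hg2 : MemLp g 2 volume), F (Tr a (hg2.toLp g)) = modLp a (F (hg2.toLp g)) := by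
    intro g hgc hgs hg2
    set f₀ : L2 := hg2.toLp g with hf₀
    have hgint : Integrable g volume := hgc.integrable_of_hasCompactSupport hgs
    have hrep : (f₀ : ℝ → ℂ) =ᵐ[volume] g := hg2.coeFn_toLp
    have hint : Integrable (f₀ : ℝ → ℂ) volume := hgint.congr hrep.symm
    have hTr_rep : (Tr a f₀ : ℝ → ℂ) =ᵐ[volume] fun x => g (x - a) := by
      refine (Lp.coeFn_compMeasurePreserving f₀ _).trans ?_
      exact (measurePreserving_sub_right volume a).quasiMeasurePreserving.ae_eq_comp hrep
    have hTint : Integrable (Tr a f₀ : ℝ → ℂ) volume :=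
      (hgint.comp_sub_right a).congr hTr_rep.symm
    have h1 : (F (Tr a f₀) : ℝ → ℂ) =ᵐ[volume] 𝓕 ((Tr a f₀ : ℝ → ℂ)) := hF _ hTint
    have h2 : 𝓕 ((Tr a f₀ : ℝ → ℂ)) = 𝓕 (fun x => g (x - a)) :=
      fourierIntegral_congr_ae hTr_rep
    have h3 : 𝓕 (fun x => g (x - a)) = fun w => modFn a w * 𝓕 g w :=
      fourierIntegral_translate a
    have h4 : (F f₀ : ℝ → ℂ) =ᵐ[volume] 𝓕 g := by
      refine (hF _ hint).trans ?_
      rw [fourierIntegral_congr_ae hrep]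
    refine Lp.ext ?_
    refine (h1.trans ?_).trans (coeFn_modLp a (F f₀)).symm
    rw [h2, h3]
    filter_upwards [h4] with ω hω
    rw [hω]
  -- approximation
  have bound : ∀ u v : L2,
      ‖(F (Tr a u) - modLp a (F u)) - (F (Tr a v) - modLp a (F v))‖ ≤ 2 * ‖u - v‖ := by
    intro u v
    have e1 : (F (Tr a u) - modLp a (F u)) - (F (Tr a v) - modLp a (F v)) =
        (F (Tr a u) - F (Tr a v)) - (modLp a (F u) - modLp a (F v)) := by abel
    rw [e1]
    refine (norm_sub_le _ _).trans ?_
    have e2 : ‖F (Tr a u) - F (Tr a v)‖ = ‖u - v‖ := by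
      rw [← map_sub, F.norm_map, ← Tr_map_sub, norm_Tr]
    have e3 : ‖modLp a (F u) - modLp a (F v)‖ = ‖u - v‖ := by
      rw [norm_modLp_sub, ← map_sub, F.norm_map]
    rw [e2, e3]; ring_nf; linarith
  have happrox : ∀ ε : ℝ, 0 < ε → ∃ v : L2, F (Tr a v) = modLp a (F v) ∧ ‖f - v‖ ≤ ε := by
    intro ε hε
    obtain ⟨g, hgs, hgle, hgc, hg2⟩ :=
      (Lp.memLp f).exists_hasCompactSupport_eLpNorm_sub_le ENNReal.ofNat_ne_top
        (ε := ENNReal.ofReal ε) (by simp [ENNReal.ofReal_eq_zero, not_le, hε])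
    refine ⟨hg2.toLp g, key g hgc hgs hg2, ?_⟩
    have : ((f - hg2.toLp g : L2) : ℝ → ℂ) =ᵐ[volume] (f : ℝ → ℂ) - g := by
      filter_upwards [Lp.coeFn_sub f (hg2.toLp g), hg2.coeFn_toLp] with ω h1 h2
      simp only [Pi.sub_apply] at h1 ⊢
      rw [h1, h2]
    rw [Lp.norm_def, eLpNorm_congr_ae this]
    calc (eLpNorm ((f : ℝ → ℂ) - g) 2 volume).toReal
        ≤ (ENNReal.ofReal ε).toReal := ENNReal.toReal_mono (by simp) hgle
      _ = ε := ENNReal.toReal_ofReal hε.le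
  have hzero : F (Tr a f) - modLp a (F f) = 0 := by
    by_contra hne
    have hpos : 0 < ‖F (Tr a f) - modLp a (F f)‖ := by
      simpa [norm_pos_iff] using hne
    obtain ⟨v, hv1, hv2⟩ := happrox (‖F (Tr a f) - modLp a (F f)‖ / 4)
      (by positivity)
    have := bound f v
    rw [hv1, sub_self, sub_zero] at this
    nlinarith
  exact sub_eq_zero.mp hzero


section Geometry
open Metric

variable {n k : ℕ}

lemma Bset_nonempty' (n k : ℕ) : (Bset n k).Nonempty := ⟨k, Bset_nonempty n k⟩

lemma infDist_Bset_add (ω : ℝ) :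
    infDist (ω + n) (Bset n k) ≤ infDist ω (Bset n k) := by
  by_contra h
  push_neg at h
  obtain ⟨y, hy, hd⟩ := (infDist_lt_iff (Bset_nonempty' n k)).mp h
  have h1 : infDist (ω + n) (Bset n k) ≤ dist (ω + n) (y + n) :=
    infDist_le_dist_of_mem (add_mem_Bset hy)
  have h2 : dist (ω + (n:ℝ)) (y + n) = dist ω y := by
    rw [Real.dist_eq, Real.dist_eq]; ring_nf
  linarith
  
lemma infDist_Bset_sub (ω : ℝ) :
    infDist (ω - n) (Bset n k) ≤ infDist ω (Bset n k) := by
  by_contra h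
  push_neg at h
  obtain ⟨y, hy, hd⟩ := (infDist_lt_iff (Bset_nonempty' n k)).mp h
  have h1 : infDist (ω - n) (Bset n k) ≤ dist (ω - n) (y - n) :=
    infDist_le_dist_of_mem (sub_mem_Bset hy)
  have h2 : dist (ω - (n:ℝ)) (y - n) = dist ω y := by
    rw [Real.dist_eq, Real.dist_eq]; ring_nf
  linarith

lemma infDist_Bset_periodic (ω : ℝ) :
    infDist (ω + n) (Bset n k) = infDist ω (Bset n k) := by
  refine le_antisymm (infDist_Bset_add ω) ?_
  have := infDist_Bset_sub (n := n) (k := k) (ω + n)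
  simpa using this

lemma infDist_Bset_pos (hk : k < n) {ω : ℝ} (h1 : ω ∉ Bset n k)
    (h2 : ¬ ∃ j : ℤ, ω = (k:ℝ) + 1 + n * j) : 0 < infDist ω (Bset n k) := by
  have hn : 0 < n := Nat.pos_of_ne_zero (by rintro rfl; omega)
  have hnR : (0:ℝ) < n := by exact_mod_cast hn
  set j : ℤ := ⌊(ω - ((k:ℝ) + 1)) / n⌋ with hj
  have hfl : ((j:ℝ)) ≤ (ω - ((k:ℝ)+1))/n := Int.floor_le _
  have hfl' : (ω - ((k:ℝ)+1))/n < (j:ℝ) + 1 := Int.lt_floor_add_one _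
  have ha : (k:ℝ) + 1 + n*j ≤ ω := by
    have := mul_le_mul_of_nonneg_left hfl hnR.le
    rw [mul_div_cancel₀ _ hnR.ne'] at this
    linarith
  have ha' : (k:ℝ) + 1 + n*j < ω := lt_of_le_of_ne ha (by
    intro hEq; exact h2 ⟨j, hEq.symm⟩)
  have haub : ω < (k:ℝ) + 1 + n*(j+1) := by
    have := mul_lt_mul_of_pos_left hfl' hnR
    rw [mul_div_cancel₀ _ hnR.ne'] at this
    push_cast
    linarith
  have hb : ω < (k:ℝ) + n*(j+1) := by
    by_contra hcon
    push_neg at hcon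
    exact h1 ⟨j+1, by push_cast; constructor <;> push_cast at hcon haub <;> linarith⟩
  set ε : ℝ := min (ω - ((k:ℝ) + 1 + n*j)) (((k:ℝ) + n*(j+1)) - ω) with hε
  have hεpos : 0 < ε := lt_min (by linarith) (by linarith)
  have hle : ε ≤ infDist ω (Bset n k) := by
    by_contra hcon
    push_neg at hcon
    obtain ⟨y, hy, hd⟩ := (infDist_lt_iff (Bset_nonempty' n k)).mp hcon
    obtain ⟨j', hy1, hy2⟩ := hy
    rw [Real.dist_eq] at hd
    rcases le_or_gt j' j with hj' | hj'
    · have : (n:ℝ)*j' ≤ n*j := by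
        apply mul_le_mul_of_nonneg_left _ hnR.le
        exact_mod_cast hj'
      have hylt : y < (k:ℝ) + 1 + n*j := by push_cast at hy2; linarith
      have : ε ≤ ω - y := le_trans (min_le_left _ _) (by linarith)
      have : ε ≤ |ω - y| := le_trans this (le_abs_self _)
      linarith
    · have hj'' : (j:ℤ) + 1 ≤ j' := hj'
      have : (n:ℝ)*(j+1) ≤ n*j' := by
        apply mul_le_mul_of_nonneg_left _ hnR.le
        exact_mod_cast hj''
      have hyge : (k:ℝ) + n*(j+1) ≤ y := by push_cast at hy1; push_cast; linarith
      have h5 : ε ≤ y - ω := le_trans (min_le_right _ _) (by linarith)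
      have h6 : ε ≤ |ω - y| := le_trans h5 (by rw [abs_sub_comm]; exact le_abs_self _)
      linarith
  linarith

end Geometry

section Gm
open Metric

def gmFn (n k m : ℕ) (ω : ℝ) : ℝ := max 0 (1 - m * infDist ω (Bset n k))

lemma continuous_gmFn (n k m : ℕ) : Continuous (gmFn n k m) :=
  continuous_const.max (continuous_const.sub
    (continuous_const.mul (continuous_infDist_pt _)))

lemma gmFn_periodic (n k m : ℕ) : Function.Periodic (gmFn n k m) (n : ℝ) := by
  intro ω
  unfold gmFn
  rw [infDist_Bset_periodic]

lemma gmFn_nonneg (n k m : ℕ) (ω : ℝ) : 0 ≤ gmFn n k m ω := le_max_left _ _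

lemma gmFn_le_one (n k m : ℕ) (ω : ℝ) : gmFn n k m ω ≤ 1 := by
  unfold gmFn
  apply max_le (by norm_num)
  have : 0 ≤ (m:ℝ) * infDist ω (Bset n k) :=
    mul_nonneg (by positivity) infDist_nonneg
  linarith

lemma gmFn_eq_one {n k : ℕ} (m : ℕ) {ω : ℝ} (h : ω ∈ Bset n k) : gmFn n k m ω = 1 := by
  unfold gmFn
  rw [infDist_zero_of_mem h]
  simp

lemma gmFn_eventually_zero {n k : ℕ} (hk : k < n) {ω : ℝ} (h1 : ω ∉ Bset n k)
    (h2 : ¬ ∃ j : ℤ, ω = (k:ℝ) + 1 + n * j) :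
    ∀ᶠ m in Filter.atTop, gmFn n k m ω = 0 := by
  have hd := infDist_Bset_pos hk h1 h2
  rw [Filter.eventually_atTop]
  refine ⟨⌈1 / infDist ω (Bset n k)⌉₊, fun m hm => ?_⟩
  unfold gmFn
  rw [max_eq_left]
  have h3 : 1 / infDist ω (Bset n k) ≤ (m:ℝ) :=
    le_trans (Nat.le_ceil _) (by exact_mod_cast hm)
  have h4 : 1 ≤ (m:ℝ) * infDist ω (Bset n k) := by
    rw [div_le_iff₀ hd] at h3
    linarith
  linarith

lemma liftIco_coe_eq {p : ℝ} (hp : 0 < p) {f : ℝ → ℂ} (hper : Function.Periodic f p)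
    (ω : ℝ) : haveI := Fact.mk hp; AddCircle.liftIco p 0 f ↑ω = f ω := by
  haveI := Fact.mk hp
  set x := toIcoMod hp 0 ω with hx
  have hmem : x ∈ Set.Ico (0:ℝ) (0 + p) := toIcoMod_mem_Ico hp 0 ω
  have hcoe : (ω : AddCircle p) = (x : AddCircle p) := by
    rw [QuotientAddGroup.eq_iff_sub_mem]
    rw [hx, self_sub_toIcoMod hp 0 ω]
    exact AddSubgroup.zsmul_mem _ (AddSubgroup.mem_zmultiples p) _
  have hfx : f x = f ω := by
    have : x = ω - toIcoDiv hp 0 ω • p := by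
      rw [hx, eq_sub_iff_add_eq, ← eq_sub_iff_add_eq']
      exact (self_sub_toIcoMod hp 0 ω).symm
    rw [this, hper.sub_zsmul_eq]
  rw [hcoe, AddCircle.liftIco_coe_apply hmem, hfx]

def gmC (n k m : ℕ) (hn : 0 < (n:ℝ)) : C(AddCircle (n:ℝ), ℂ) :=
  haveI := Fact.mk hn
  ⟨AddCircle.liftIco (n:ℝ) 0 (fun ω => (gmFn n k m ω : ℂ)),
   AddCircle.liftIco_continuous
     (by rw [zero_add]; norm_cast; exact (gmFn_periodic n k m 0).symm.trans (by rw [zero_add]))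
     ((Complex.continuous_ofReal.comp (continuous_gmFn n k m)).continuousOn)⟩

lemma gmC_coe (n k m : ℕ) (hn : 0 < (n:ℝ)) (ω : ℝ) :
    gmC n k m hn ↑ω = (gmFn n k m ω : ℂ) := by
  haveI := Fact.mk hn
  have hper : Function.Periodic (fun ω => (gmFn n k m ω : ℂ)) (n:ℝ) := fun x => by
    simp only []; norm_cast; exact gmFn_periodic n k m x
  exact liftIco_coe_eq hn hper ω

end Gm

section Mult
open scoped ENNReal

def cutLp (n k : ℕ) (u : L2) : L2 :=
  ((Lp.memLp u).indicator (measurableSet_Bset n k)).toLp _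

lemma coeFn_cutLp (n k : ℕ) (u : L2) :
    (cutLp n k u : ℝ → ℂ) =ᵐ[volume] (Bset n k).indicator (u : ℝ → ℂ) :=
  MemLp.coeFn_toLp _

variable {n : ℕ} [hfact : Fact (0 < (n:ℝ))]

def mulFun (u : L2) (φ : C(AddCircle (n:ℝ), ℂ)) : L2 :=
  (memMul ((φ.continuous.comp (AddCircle.continuous_mk' _)).aestronglyMeasurable)
    (C := ‖φ‖) (fun ω => φ.norm_coe_le_norm _) u).toLp _

lemma coeFn_mulFun (u : L2) (φ : C(AddCircle (n:ℝ), ℂ)) :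
    (mulFun u φ : ℝ → ℂ) =ᵐ[volume] fun ω : ℝ => φ ↑ω * (u : ℝ → ℂ) ω :=
  MemLp.coeFn_toLp _

lemma mulFun_add (u : L2) (φ ψ : C(AddCircle (n:ℝ), ℂ)) :
    mulFun u (φ + ψ) = mulFun u φ + mulFun u ψ := by
  apply Lp.ext
  filter_upwards [coeFn_mulFun u (φ + ψ), coeFn_mulFun u φ, coeFn_mulFun u ψ,
    Lp.coeFn_add (mulFun u φ) (mulFun u ψ)] with ω h1 h2 h3 h4
  simp only [Pi.add_apply] at h4
  rw [h1, h4, h2, h3, ContinuousMap.add_apply]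
  ring

lemma mulFun_smul (u : L2) (c : ℂ) (φ : C(AddCircle (n:ℝ), ℂ)) :
    mulFun u (c • φ) = c • mulFun u φ := by
  apply Lp.ext
  filter_upwards [coeFn_mulFun u (c • φ), coeFn_mulFun u φ,
    Lp.coeFn_smul c (mulFun u φ)] with ω h1 h2 h3
  simp only [Pi.smul_apply, smul_eq_mul] at h3
  rw [h1, h3, h2, ContinuousMap.smul_apply, smul_eq_mul]
  ring

lemma norm_mulFun_le (u : L2) (φ : C(AddCircle (n:ℝ), ℂ)) :
    ‖mulFun u φ‖ ≤ ‖u‖ * ‖φ‖ := by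
  rw [mulFun, Lp.norm_toLp]
  have h1 : eLpNorm (fun ω : ℝ => φ ↑ω * (u : ℝ → ℂ) ω) 2 volume ≤
      eLpNorm ((‖φ‖ : ℂ) • (u : ℝ → ℂ)) 2 volume := by
    apply eLpNorm_mono_ae
    apply Filter.Eventually.of_forall
    intro ω
    simp only [Pi.smul_apply, smul_eq_mul, norm_mul]
    rw [Complex.norm_real, Real.norm_eq_abs, abs_norm]
    exact mul_le_mul_of_nonneg_right (φ.norm_coe_le_norm _) (norm_nonneg _)
  have h2 : eLpNorm ((‖φ‖ : ℂ) • (u : ℝ → ℂ)) 2 volume =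
      ‖(‖φ‖ : ℂ)‖₊ • eLpNorm (u : ℝ → ℂ) 2 volume := eLpNorm_const_smul _ _ _ _
  rw [h2, ENNReal.smul_def, smul_eq_mul] at h1
  calc (eLpNorm (fun ω : ℝ => φ ↑ω * (u : ℝ → ℂ) ω) 2 volume).toReal
      ≤ ((‖(‖φ‖ : ℂ)‖₊ : ℝ≥0∞) * eLpNorm (u : ℝ → ℂ) 2 volume).toReal :=
        ENNReal.toReal_mono (ENNReal.mul_ne_top ENNReal.coe_ne_top (Lp.eLpNorm_ne_top u)) h1
    _ = ‖u‖ * ‖φ‖ := by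
        rw [ENNReal.toReal_mul, ENNReal.coe_toReal, coe_nnnorm, Complex.norm_real, Real.norm_eq_abs,
          abs_norm, ← Lp.norm_def]
        ring

def mulL (u : L2) : C(AddCircle (n:ℝ), ℂ) →ₗ[ℂ] L2 where
  toFun := mulFun u
  map_add' := mulFun_add u
  map_smul' := mulFun_smul u

lemma continuous_mulL (u : L2) : Continuous (mulL (n := n) u) :=
  AddMonoidHomClass.continuous_of_bound (mulL u) ‖u‖
    (fun φ => norm_mulFun_le u φ)

end Mult

section CutMem
open scoped ENNReal Topology
open Filter

theorem cut_mem (F : L2 ≃ₗᵢ[ℂ] L2) (hF : IsFourierTransform F) {n : ℕ} (hn : 0 < n)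
    (S : Submodule ℂ L2) (hS : IsClosed (S : Set L2))
    (hninv : ∀ f ∈ S, ∀ j : ℤ, Tr ((j : ℝ) / n) f ∈ S) {k : ℕ} (hk : k < n)
    {f : L2} (hf : f ∈ S) : F.symm (cutLp n k (F f)) ∈ S := by
  have hnR : (0:ℝ) < n := by exact_mod_cast hn
  haveI := Fact.mk hnR
  set u : L2 := F f with hu
  -- the multiplication linear map followed by F.symm
  set Ψ : C(AddCircle (n:ℝ), ℂ) →ₗ[ℂ] L2 :=
    ((F.symm.toLinearEquiv : L2 ≃ₗ[ℂ] L2) : L2 →ₗ[ℂ] L2).comp (mulL u) with hΨ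
  have hΨapp : ∀ φ, Ψ φ = F.symm (mulFun u φ) := fun φ => rfl
  have hΨcont : Continuous Ψ := F.symm.continuous.comp (continuous_mulL u)
  set V : Submodule ℂ C(AddCircle (n:ℝ), ℂ) := S.comap Ψ with hV
  have hVclosed : IsClosed (V : Set C(AddCircle (n:ℝ), ℂ)) := hS.preimage hΨcont
  have hfour : ∀ m : ℤ, fourier (T := (n:ℝ)) m ∈ V := by
    intro m
    have heq : mulFun u (fourier (T := (n:ℝ)) m) = F (Tr (((-m : ℤ) : ℝ) / n) f) := by
      rw [F_Tr F hF]
      apply Lp.ext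
      filter_upwards [coeFn_mulFun u (fourier (T := (n:ℝ)) m),
        coeFn_modLp (((-m : ℤ) : ℝ) / n) (F f)] with ω h1 h2
      rw [h1, h2]
      congr 1
      rw [fourier_coe_apply, modFn, Real.fourierChar_apply]
      congr 1
      push_cast
      ring
    show Ψ _ ∈ S
    rw [hΨapp, heq, F.symm_apply_apply]
    exact hninv f hf (-m)
  have htop : (⊤ : Submodule ℂ C(AddCircle (n:ℝ), ℂ)) ≤ V := by
    rw [← span_fourier_closure_eq_top]
    apply Submodule.topologicalClosure_minimal _ _ hVclosed
    rw [Submodule.span_le]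
    rintro _ ⟨m, rfl⟩
    exact hfour m
  have hall : ∀ φ : C(AddCircle (n:ℝ), ℂ), F.symm (mulFun u φ) ∈ S := by
    intro φ
    have := htop (Submodule.mem_top (x := φ))
    rwa [hV, Submodule.mem_comap, hΨapp] at this
  -- convergence
  set dm : ℕ → ℝ → ℂ := fun m ω =>
    (gmFn n k m ω : ℂ) * (u : ℝ → ℂ) ω - (Bset n k).indicator (u : ℝ → ℂ) ω with hdm
  have hdm_meas : ∀ m, AEStronglyMeasurable (dm m) volume := fun m =>
    (((Complex.continuous_ofReal.comp (continuous_gmFn n k m)).aestronglyMeasurable).mul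
      (Lp.aestronglyMeasurable u)).sub
      ((Lp.aestronglyMeasurable u).indicator (measurableSet_Bset n k))
  have hdm_bd : ∀ m, ∀ ω, (‖dm m ω‖₊ : ℝ≥0∞) ^ (2:ℕ) ≤ 4 * (‖(u : ℝ → ℂ) ω‖₊ : ℝ≥0∞) ^ (2:ℕ) := by
    intro m ω
    have hb : ‖dm m ω‖ ≤ 2 * ‖(u : ℝ → ℂ) ω‖ := by
      refine (norm_sub_le _ _).trans ?_
      have e1 : ‖(gmFn n k m ω : ℂ) * (u : ℝ → ℂ) ω‖ ≤ ‖(u : ℝ → ℂ) ω‖ := by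
        rw [norm_mul, Complex.norm_real, Real.norm_eq_abs,
          abs_of_nonneg (gmFn_nonneg n k m ω)]
        nlinarith [gmFn_le_one n k m ω, norm_nonneg ((u : ℝ → ℂ) ω), gmFn_nonneg n k m ω]
      have e2 : ‖(Bset n k).indicator (u : ℝ → ℂ) ω‖ ≤ ‖(u : ℝ → ℂ) ω‖ := by
        by_cases hmem : ω ∈ Bset n k
        · rw [Set.indicator_of_mem hmem]
        · rw [Set.indicator_of_notMem hmem]; simp
      linarith
    have hbnn : (‖dm m ω‖₊ : ℝ≥0∞) ≤ 2 * (‖(u : ℝ → ℂ) ω‖₊ : ℝ≥0∞) := by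
      have : ‖dm m ω‖₊ ≤ 2 * ‖(u : ℝ → ℂ) ω‖₊ := by
        rw [← NNReal.coe_le_coe]
        push_cast
        simpa using hb
      exact_mod_cast this
    calc (‖dm m ω‖₊ : ℝ≥0∞) ^ (2:ℕ) ≤ (2 * (‖(u : ℝ → ℂ) ω‖₊ : ℝ≥0∞)) ^ (2:ℕ) :=
          pow_le_pow_left' hbnn 2
      _ = 4 * (‖(u : ℝ → ℂ) ω‖₊ : ℝ≥0∞) ^ (2:ℕ) := by ring
  have hufin : (∫⁻ ω, (‖(u : ℝ → ℂ) ω‖₊ : ℝ≥0∞) ^ (2:ℕ) ∂volume) ≠ ⊤ := by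
    intro hcon
    have := Lp.eLpNorm_ne_top u
    rw [eLpNorm_eq_lintegral_rpow_enorm_toReal (by norm_num) (by norm_num)] at this
    apply this
    have h2 : ((2:ℝ≥0∞)).toReal = (2:ℝ) := by norm_num
    rw [h2]
    have : ∀ ω : ℝ, (‖(u : ℝ → ℂ) ω‖₊ : ℝ≥0∞) ^ (2:ℝ) = (‖(u : ℝ → ℂ) ω‖₊ : ℝ≥0∞) ^ (2:ℕ) := by
      intro ω
      rw [← ENNReal.rpow_natCast]
      norm_num
    simp_rw [enorm_eq_nnnorm, this, hcon]
    rw [ENNReal.top_rpow_of_pos (by norm_num)]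
  have hN : ∀ᵐ ω : ℝ ∂volume, ¬ ∃ j : ℤ, ω = (k:ℝ) + 1 + n * j := by
    have hc : {ω : ℝ | ∃ j : ℤ, ω = (k:ℝ) + 1 + n * j}.Countable := by
      have : {ω : ℝ | ∃ j : ℤ, ω = (k:ℝ) + 1 + n * j} =
          Set.range (fun j : ℤ => (k:ℝ) + 1 + n * j) := by
        ext ω; simp [eq_comm]
      rw [this]
      exact Set.countable_range _
    exact MeasureTheory.measure_eq_zero_iff_ae_notMem.mp (hc.measure_zero volume)
  have hptwise : ∀ᵐ ω : ℝ ∂volume,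
      Tendsto (fun m => (‖dm m ω‖₊ : ℝ≥0∞) ^ (2:ℕ)) atTop (𝓝 0) := by
    filter_upwards [hN] with ω hω
    by_cases hmem : ω ∈ Bset n k
    · have : ∀ m, (‖dm m ω‖₊ : ℝ≥0∞) ^ (2:ℕ) = 0 := by
        intro m
        rw [hdm]
        simp only [gmFn_eq_one m hmem, Set.indicator_of_mem hmem]
        norm_num
      simp_rw [this]
      exact tendsto_const_nhds
    · have hev : ∀ᶠ m in atTop, (‖dm m ω‖₊ : ℝ≥0∞) ^ (2:ℕ) = 0 := by
        filter_upwards [gmFn_eventually_zero hk hmem hω] with m hm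
        rw [hdm]
        simp only [hm, Set.indicator_of_notMem hmem]
        norm_num
      exact Tendsto.congr' (by filter_upwards [hev] with m hm; exact hm.symm) tendsto_const_nhds
  have hlin : Tendsto (fun m => ∫⁻ ω, (‖dm m ω‖₊ : ℝ≥0∞) ^ (2:ℕ) ∂volume) atTop (𝓝 0) := by
    have := tendsto_lintegral_of_dominated_convergence'
      (fun ω => 4 * (‖(u : ℝ → ℂ) ω‖₊ : ℝ≥0∞) ^ (2:ℕ))
      (fun m => (((hdm_meas m).enorm).pow_const (2:ℕ)))
      (fun m => Filter.Eventually.of_forall (hdm_bd m))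
      (by
        rw [lintegral_const_mul' _ _ (by norm_num)]
        exact ENNReal.mul_ne_top (by norm_num) hufin)
      hptwise
    simpa [enorm_eq_nnnorm] using this
  have help : Tendsto (fun m => eLpNorm (dm m) 2 volume) atTop (𝓝 0) := by
    have heq : ∀ m, eLpNorm (dm m) 2 volume =
        (∫⁻ ω, (‖dm m ω‖₊ : ℝ≥0∞) ^ (2:ℕ) ∂volume) ^ ((1:ℝ)/2) := by
      intro m
      rw [eLpNorm_eq_lintegral_rpow_enorm_toReal (by norm_num) (by norm_num)]
      have h2 : ((2:ℝ≥0∞)).toReal = (2:ℝ) := by norm_num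
      rw [h2]
      congr 1
      apply lintegral_congr
      intro ω
      rw [enorm_eq_nnnorm, ← ENNReal.rpow_natCast]
      norm_num
    simp_rw [heq]
    have hcont := (ENNReal.continuous_rpow_const (y := (1:ℝ)/2)).tendsto 0
    have := hcont.comp hlin
    rwa [ENNReal.zero_rpow_of_pos (by norm_num)] at this
  have htoReal : Tendsto (fun m => (eLpNorm (dm m) 2 volume).toReal) atTop (𝓝 0) := by
    have := (ENNReal.tendsto_toReal (a := 0) (by simp)).comp help
    simpa [Function.comp_def] using this
  have hnorm : ∀ m, ‖mulFun u (gmC n k m hnR) - cutLp n k u‖ =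
      (eLpNorm (dm m) 2 volume).toReal := by
    intro m
    rw [Lp.norm_def]
    congr 1
    apply eLpNorm_congr_ae
    filter_upwards [Lp.coeFn_sub (mulFun u (gmC n k m hnR)) (cutLp n k u),
      coeFn_mulFun u (gmC n k m hnR), coeFn_cutLp n k u] with ω h1 h2 h3
    simp only [Pi.sub_apply] at h1
    rw [h1, h2, h3, hdm]
    simp only [gmC_coe]
  have hconv : Tendsto (fun m => mulFun u (gmC n k m hnR)) atTop (𝓝 (cutLp n k u)) := by
    rw [tendsto_iff_norm_sub_tendsto_zero]
    exact htoReal.congr (fun m => (hnorm m).symm)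
  have hfinal : Tendsto (fun m => F.symm (mulFun u (gmC n k m hnR))) atTop
      (𝓝 (F.symm (cutLp n k u))) := (F.symm.continuous.tendsto _).comp hconv
  exact hS.mem_of_tendsto hfinal
    (Filter.Eventually.of_forall fun m => hall (gmC n k m hnR))

end CutMem

section Inner
open scoped ENNReal

lemma sum_indicator_fin (n : ℕ) (hn : 0 < n) (h : ℝ → ℂ) (ω : ℝ) :
    ∑ k : Fin n, (Bset n (k:ℕ)).indicator h ω = h ω := by
  have hnZ : (0:ℤ) < n := by exact_mod_cast hn
  set r : ℤ := ⌊ω⌋ % n with hr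
  have hr0 : 0 ≤ r := Int.emod_nonneg _ hnZ.ne'
  have hrn : r < n := Int.emod_lt_of_pos _ hnZ
  have hrn' : r.toNat < n := by omega
  set k₀ : Fin n := ⟨r.toNat, hrn'⟩ with hk₀
  have hmem : ∀ k : Fin n, ω ∈ Bset n (k:ℕ) ↔ ((k:ℕ) : ℤ) = r := fun k =>
    mem_Bset_iff_emod k.2
  have hmem₀ : ω ∈ Bset n (k₀:ℕ) := (hmem k₀).mpr (by simp [hk₀]; omega)
  rw [Finset.sum_eq_single k₀]
  · rw [Set.indicator_of_mem hmem₀]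
  · intro k _ hk
    rw [Set.indicator_of_notMem]
    intro hmemk
    apply hk
    have h1 := (hmem k).mp hmemk
    apply Fin.ext
    have : (k:ℕ) = r.toNat := by omega
    simpa [hk₀] using this
  · intro h'; exact absurd (Finset.mem_univ k₀) h'

lemma inner_Tr_cut (F : L2 ≃ₗᵢ[ℂ] L2) (hF : IsFourierTransform F) (n k : ℕ)
    (w g pkg : L2)
    (hPk : (F pkg : ℝ → ℂ) =ᵐ[volume] (Bset n k).indicator (F g : ℝ → ℂ)) (j : ℤ) :
    (inner ℂ w (Tr (j:ℝ) pkg) : ℂ) =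
      inner ℂ (F.symm (cutLp n k (F w))) (Tr (j:ℝ) g) := by
  rw [← F.inner_map_map w (Tr (j:ℝ) pkg),
    ← F.inner_map_map (F.symm (cutLp n k (F w))) (Tr (j:ℝ) g),
    F.apply_symm_apply, F_Tr F hF, F_Tr F hF, L2.inner_def, L2.inner_def]
  apply integral_congr_ae
  filter_upwards [coeFn_modLp (j:ℝ) (F pkg), coeFn_modLp (j:ℝ) (F g),
    coeFn_cutLp n k (F w), hPk] with ω h1 h2 h3 h4
  rw [h1, h2, h3, h4]
  simp only [RCLike.inner_apply]
  by_cases hmem : ω ∈ Bset n k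
  · rw [Set.indicator_of_mem hmem, Set.indicator_of_mem hmem]
  · rw [Set.indicator_of_notMem hmem, Set.indicator_of_notMem hmem]
    simp

lemma norm_sq_sum (F : L2 ≃ₗᵢ[ℂ] L2) (n : ℕ) (hn : 0 < n) (w : L2) :
    ∑ k : Fin n, ‖F.symm (cutLp n (k:ℕ) (F w))‖^2 = ‖w‖^2 := by
  have hinner : ∀ k : Fin n,
      (inner ℂ (F.symm (cutLp n (k:ℕ) (F w))) (F.symm (cutLp n (k:ℕ) (F w))) : ℂ) =
      ∫ ω, (Bset n (k:ℕ)).indicator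
        (fun ω' => (starRingEnd ℂ) ((F w : ℝ → ℂ) ω') * (F w : ℝ → ℂ) ω') ω ∂volume := by
    intro k
    rw [F.symm.inner_map_map, L2.inner_def]
    apply integral_congr_ae
    filter_upwards [coeFn_cutLp n (k:ℕ) (F w)] with ω h1
    rw [h1]
    simp only [RCLike.inner_apply]
    by_cases hmem : ω ∈ Bset n (k:ℕ)
    · rw [Set.indicator_of_mem hmem, Set.indicator_of_mem hmem]; ring
    · rw [Set.indicator_of_notMem hmem, Set.indicator_of_notMem hmem]
      simp
  have hInt : ∀ k : Fin n, Integrable (fun ω => (Bset n (k:ℕ)).indicator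
      (fun ω' => (starRingEnd ℂ) ((F w : ℝ → ℂ) ω') * (F w : ℝ → ℂ) ω') ω) volume := by
    intro k
    apply (L2.integrable_inner (𝕜 := ℂ) (cutLp n (k:ℕ) (F w)) (cutLp n (k:ℕ) (F w))).congr
    filter_upwards [coeFn_cutLp n (k:ℕ) (F w)] with ω h1
    rw [h1]
    simp only [RCLike.inner_apply]
    by_cases hmem : ω ∈ Bset n (k:ℕ)
    · rw [Set.indicator_of_mem hmem, Set.indicator_of_mem hmem]; ring
    · rw [Set.indicator_of_notMem hmem, Set.indicator_of_notMem hmem]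
      simp
  have hsum : ∑ k : Fin n,
      (inner ℂ (F.symm (cutLp n (k:ℕ) (F w))) (F.symm (cutLp n (k:ℕ) (F w))) : ℂ) =
      (inner ℂ w w : ℂ) := by
    simp_rw [hinner]
    rw [← integral_finset_sum _ (fun k _ => hInt k)]
    have : ∀ ω : ℝ, ∑ k : Fin n, (Bset n (k:ℕ)).indicator
        (fun ω' => (starRingEnd ℂ) ((F w : ℝ → ℂ) ω') * (F w : ℝ → ℂ) ω') ω =
        (starRingEnd ℂ) ((F w : ℝ → ℂ) ω) * (F w : ℝ → ℂ) ω := fun ω =>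
      sum_indicator_fin n hn _ ω
    rw [integral_congr_ae (Filter.Eventually.of_forall this)]
    rw [← F.inner_map_map w w, L2.inner_def]
    refine integral_congr_ae (Filter.Eventually.of_forall fun a => ?_); simp only [RCLike.inner_apply]; ring
  have := congrArg Complex.re hsum
  rw [Complex.re_sum] at this
  calc ∑ k : Fin n, ‖F.symm (cutLp n (k:ℕ) (F w))‖^2
      = ∑ k : Fin n, Complex.re (inner ℂ (F.symm (cutLp n (k:ℕ) (F w)))
          (F.symm (cutLp n (k:ℕ) (F w))) : ℂ) := by
        refine Finset.sum_congr rfl fun k _ => ?_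
        rw [← inner_self_eq_norm_sq (𝕜 := ℂ)]
        rfl
    _ = Complex.re (inner ℂ w w : ℂ) := this
    _ = ‖w‖^2 := by rw [← inner_self_eq_norm_sq (𝕜 := ℂ)]; rfl

end Inner
end Aux

/-- If the integer translates of `𝒢 ⊆ S` form a frame for a `(1/n)ℤ`-invariant SIS `S`
with bounds `A, B`, then the integer translates of all the cutoffs `P_k f`, `f ∈ 𝒢`,
`k = 0, …, n-1`, form a frame for `S` with the same bounds. -/


theorem stmt13 (F : L2 ≃ₗᵢ[ℂ] L2) (hF : IsFourierTransform F)
    (n : ℕ) (hn : 0 < n)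
    (S : Submodule ℂ L2) (hS : IsClosed (S : Set L2))
    (hinv : ∀ f ∈ S, ∀ j : ℤ, Tr (j : ℝ) f ∈ S)
    (hninv : ∀ f ∈ S, ∀ j : ℤ, Tr ((j : ℝ) / n) f ∈ S)
    (𝒢 : Set L2) (hcount : 𝒢.Countable) (h𝒢S : 𝒢 ⊆ (S : Set L2))
    (A B : ℝ) (hA : 0 < A) (hB : 0 < B)
    (hframe : ∀ w ∈ S, A * ‖w‖ ^ 2 ≤
        (∑' p : 𝒢 × ℤ, ‖(inner ℂ w (Tr (p.2 : ℝ) (p.1 : L2)) : ℂ)‖ ^ 2) ∧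
      (∑' p : 𝒢 × ℤ, ‖(inner ℂ w (Tr (p.2 : ℝ) (p.1 : L2)) : ℂ)‖ ^ 2) ≤ B * ‖w‖ ^ 2)
    (P : 𝒢 → Fin n → L2)
    (hP : ∀ (f : 𝒢) (k : Fin n),
      (F (P f k) : ℝ → ℂ) =ᵐ[volume] (Bset n k).indicator (F (f : L2) : ℝ → ℂ)) :
    ∀ w ∈ S, A * ‖w‖ ^ 2 ≤
        (∑' p : 𝒢 × ℤ × Fin n, ‖(inner ℂ w (Tr (p.2.1 : ℝ) (P p.1 p.2.2)) : ℂ)‖ ^ 2) ∧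
      (∑' p : 𝒢 × ℤ × Fin n, ‖(inner ℂ w (Tr (p.2.1 : ℝ) (P p.1 p.2.2)) : ℂ)‖ ^ 2) ≤
        B * ‖w‖ ^ 2 := by
  intro w hw
  set Q : Fin n → L2 := fun k => F.symm (Aux.cutLp n k (F w)) with hQ
  have hQS : ∀ k : Fin n, Q k ∈ S := fun k => Aux.cut_mem F hF hn S hS hninv k.2 hw
  set b : Fin n → 𝒢 × ℤ → ℝ :=
    fun k p => ‖(inner ℂ (Q k) (Tr (p.2 : ℝ) (p.1 : L2)) : ℂ)‖ ^ 2 with hb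
  have hbnonneg : ∀ k p, 0 ≤ b k p := fun k p => by positivity
  have hQframe : ∀ k : Fin n, A * ‖Q k‖ ^ 2 ≤ (∑' p, b k p) ∧
      (∑' p, b k p) ≤ B * ‖Q k‖ ^ 2 := fun k => hframe (Q k) (hQS k)
  have hQsummable : ∀ k : Fin n, Summable (b k) := by
    intro k
    by_contra hns
    have h0 := (hQframe k).1
    rw [tsum_eq_zero_of_not_summable hns] at h0
    have hQnorm : ‖Q k‖ = 0 := by
      by_contra hne
      have hpos : 0 < ‖Q k‖ := lt_of_le_of_ne (norm_nonneg _) (Ne.symm hne)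
      nlinarith [mul_pos hA (mul_pos hpos hpos)]
    have hQ0 : Q k = 0 := norm_eq_zero.mp hQnorm
    apply hns
    have hzero : b k = fun _ => 0 := by
      funext p
      rw [hb]
      simp [hQ0]
    rw [hzero]
    exact summable_zero
  have hkey : ∀ p : 𝒢 × ℤ × Fin n,
      ‖(inner ℂ w (Tr (p.2.1 : ℝ) (P p.1 p.2.2)) : ℂ)‖ ^ 2 = b p.2.2 (p.1, p.2.1) := by
    intro p
    rw [hb]
    rw [Aux.inner_Tr_cut F hF n (p.2.2 : ℕ) w (p.1 : L2) (P p.1 p.2.2) (hP p.1 p.2.2) p.2.1]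
  set g : Fin n × (𝒢 × ℤ) → ℝ := fun q => b q.1 q.2 with hg
  have hgsummable : Summable g := by
    rw [summable_prod_of_nonneg (fun q => hbnonneg q.1 q.2)]
    exact ⟨fun k => hQsummable k, Summable.of_finite⟩
  set e : (𝒢 × ℤ × Fin n) ≃ (Fin n × (𝒢 × ℤ)) :=
    { toFun := fun p => (p.2.2, (p.1, p.2.1)),
      invFun := fun q => (q.2.1, (q.2.2, q.1)),
      left_inv := fun p => rfl,
      right_inv := fun q => rfl } with he
  have htsum : (∑' p : 𝒢 × ℤ × Fin n, ‖(inner ℂ w (Tr (p.2.1 : ℝ) (P p.1 p.2.2)) : ℂ)‖ ^ 2) =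
      ∑ k : Fin n, ∑' q : 𝒢 × ℤ, b k q := by
    calc (∑' p : 𝒢 × ℤ × Fin n, ‖(inner ℂ w (Tr (p.2.1 : ℝ) (P p.1 p.2.2)) : ℂ)‖ ^ 2)
        = ∑' p : 𝒢 × ℤ × Fin n, g (e p) := tsum_congr fun p => hkey p
      _ = ∑' q : Fin n × (𝒢 × ℤ), g q := e.tsum_eq g
      _ = ∑' (k : Fin n) (q : 𝒢 × ℤ), g (k, q) := Summable.tsum_prod hgsummable
      _ = ∑ k : Fin n, ∑' q : 𝒢 × ℤ, b k q := by rw [tsum_fintype]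
  have hnormsum : ∑ k : Fin n, ‖Q k‖ ^ 2 = ‖w‖ ^ 2 := Aux.norm_sq_sum F n hn w
  constructor
  · rw [htsum]
    calc A * ‖w‖ ^ 2 = ∑ k : Fin n, A * ‖Q k‖ ^ 2 := by rw [← Finset.mul_sum, hnormsum]
      _ ≤ ∑ k : Fin n, ∑' q : 𝒢 × ℤ, b k q := Finset.sum_le_sum fun k _ => (hQframe k).1
  · rw [htsum]
    calc ∑ k : Fin n, ∑' q : 𝒢 × ℤ, b k q ≤ ∑ k : Fin n, B * ‖Q k‖ ^ 2 :=
          Finset.sum_le_sum fun k _ => (hQframe k).2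
      _ = B * ‖w‖ ^ 2 := by rw [← Finset.mul_sum, hnormsum]
end
end

section
/- Let φ ∈ L²(ℝ) and suppose the shift-invariant space S(φ) generated by the integer translates of φ is (1/n)ℤ-invariant for some integer n > 1. Then for every interval I ⊆ ℝ of length n, |{ω ∈ I : φ̂(ω) = 0}| ≥ n − 1. In particular, φ̂ vanishes on a set of infinite Lebesgue measure. -/
open MeasureTheory FourierTransform

noncomputable section

open Filter Function Complex Topology

def ch (a : ℝ) (ω : ℝ) : ℂ := (𝐞 (-(a * ω)) : Circle)

lemma norm_ch (a ω : ℝ) : ‖ch a ω‖ = 1 := by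
  simp [ch, Circle.norm_coe]

lemma ch_ne_zero (a ω : ℝ) : ch a ω ≠ 0 := by
  intro h; have := norm_ch a ω; rw [h] at this; simp at this

lemma continuous_ch (a : ℝ) : Continuous (ch a) := by
  exact (continuous_induced_dom.comp (Real.continuous_fourierChar.comp (by continuity)))

lemma ch_add (a : ℝ) (x y : ℝ) : ch a (x + y) = ch a x * ch a y := by
  simp only [ch, mul_add, neg_add]
  rw [AddChar.map_add_eq_mul]
  simp

lemma ch_int_one (j : ℤ) : ch (j : ℝ) 1 = 1 := by
  simp only [ch, mul_one, Real.fourierChar_apply]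
  rw [show ((2 * Real.pi * (-(j:ℝ))) : ℝ) = ((-j : ℤ) : ℝ) * (2 * Real.pi) by push_cast; ring]
  push_cast
  rw [show ((-(j:ℂ)) * (2 * Real.pi) * Complex.I) = (-j : ℤ) * (2 * Real.pi * Complex.I) by push_cast; ring]
  exact Complex.exp_int_mul_two_pi_mul_I (-j)

lemma ch_periodic (j : ℤ) : Function.Periodic (ch (j : ℝ)) 1 := by
  intro x; rw [ch_add, ch_int_one, mul_one]

lemma coeFn_Tr (a : ℝ) (f : L2) : (Tr a f : ℝ → ℂ) =ᵐ[volume] fun x => f (x - a) :=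
  Lp.coeFn_compMeasurePreserving f _

lemma isometry_Tr (a : ℝ) : Isometry (Tr a) :=
  Lp.isometry_compMeasurePreserving _

lemma memLp_ch_mul (a : ℝ) (f : L2) :
    MemLp (fun ω => ch a ω * (f : ℝ → ℂ) ω) 2 volume := by
  refine ⟨((continuous_ch a).aestronglyMeasurable).mul (Lp.aestronglyMeasurable f), ?_⟩
  have h : eLpNorm (fun ω => ch a ω * (f : ℝ → ℂ) ω) 2 volume
      = eLpNorm (f : ℝ → ℂ) 2 volume := by
    apply eLpNorm_congr_norm_ae
    filter_upwards with x
    rw [norm_mul, norm_ch, one_mul]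
  rw [h]; exact Lp.eLpNorm_lt_top f

def chMul (a : ℝ) (f : L2) : L2 := (memLp_ch_mul a f).toLp _

lemma coeFn_chMul (a : ℝ) (f : L2) :
    (chMul a f : ℝ → ℂ) =ᵐ[volume] fun ω => ch a ω * (f : ℝ → ℂ) ω :=
  MemLp.coeFn_toLp _

lemma chMul_sub (a : ℝ) (f g : L2) : chMul a (f - g) = chMul a f - chMul a g := by
  apply Lp.ext
  filter_upwards [coeFn_chMul a (f - g), coeFn_chMul a f, coeFn_chMul a g,
    Lp.coeFn_sub f g, Lp.coeFn_sub (chMul a f) (chMul a g)] with x h1 h2 h3 h4 h5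
  rw [h1, h5]; simp only [Pi.sub_apply, h2, h3, h4]; ring

lemma norm_chMul (a : ℝ) (f : L2) : ‖chMul a f‖ = ‖f‖ := by
  rw [chMul, Lp.norm_toLp]
  · rw [Lp.norm_def]
    congr 1
    apply eLpNorm_congr_norm_ae
    filter_upwards with x
    rw [norm_mul, norm_ch, one_mul]

lemma isometry_chMul (a : ℝ) : Isometry (chMul a) := by
  intro f g
  rw [edist_dist, edist_dist, dist_eq_norm, dist_eq_norm, ← chMul_sub, norm_chMul]

lemma fourier_congr_ae {f g : ℝ → ℂ} (h : f =ᵐ[volume] g) : 𝓕 f = 𝓕 g := by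
  funext w
  simp only [Real.fourier_real_eq]
  exact integral_congr_ae (h.mono fun x hx => by simp only [hx])

lemma fourier_translate {f : ℝ → ℂ} (a : ℝ) :
    𝓕 (fun x => f (x - a)) = fun ω => ch a ω * 𝓕 f ω := by
  have h := VectorFourier.fourierIntegral_comp_add_right 𝐞 (volume : Measure ℝ)
    (innerₗ ℝ) f (-a)
  have h2 : (f ∘ fun v => v + -a) = fun x => f (x - a) := by
    funext x; simp [sub_eq_add_neg]
  rw [h2] at h
  rw [show 𝓕 (fun x => f (x - a)) = VectorFourier.fourierIntegral 𝐞 volume (innerₗ ℝ) (fun x => f (x - a)) from rfl, h]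
  funext ω
  rw [show (innerₗ ℝ) (-a) ω = -(a * ω) by simp [RCLike.inner_apply]; ring]
  rfl


lemma dense_integrable : Dense {f : L2 | Integrable (f : ℝ → ℂ) volume} := by
  have h := Lp.simpleFunc.dense (E := ℂ) (μ := (volume : Measure ℝ)) (p := 2) (by norm_num)
  refine Dense.mono ?_ h
  rintro f hf
  set g : Lp.simpleFunc ℂ 2 (volume : Measure ℝ) := ⟨f, hf⟩ with hg
  have heq : (Lp.simpleFunc.toSimpleFunc g : ℝ → ℂ) =ᵐ[volume] (f : ℝ → ℂ) :=
    Lp.simpleFunc.toSimpleFunc_eq_toFun g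
  have hmem : MemLp (Lp.simpleFunc.toSimpleFunc g : ℝ → ℂ) 2 volume :=
    Lp.simpleFunc.memLp g
  have hint : Integrable (Lp.simpleFunc.toSimpleFunc g : ℝ → ℂ) volume := by
    rw [← SimpleFunc.memLp_iff_integrable (p := 2) (by norm_num) (by norm_num)]
    exact hmem
  exact hint.congr heq

lemma FT_Tr (F : L2 ≃ₗᵢ[ℂ] L2) (hF : IsFourierTransform F) (a : ℝ) (f : L2) :
    F (Tr a f) = chMul a (F f) := by
  have hclosed : IsClosed {f : L2 | F (Tr a f) = chMul a (F f)} := by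
    apply isClosed_eq
    · exact F.continuous.comp (isometry_Tr a).continuous
    · exact (isometry_chMul a).continuous.comp F.continuous
  have hsub : {f : L2 | Integrable (f : ℝ → ℂ) volume} ⊆
      {f : L2 | F (Tr a f) = chMul a (F f)} := by
    intro f hf
    have htr : (Tr a f : ℝ → ℂ) =ᵐ[volume] fun x => (f : ℝ → ℂ) (x - a) := coeFn_Tr a f
    have hint : Integrable ((Tr a f : L2) : ℝ → ℂ) volume :=
      (hf.comp_sub_right a).congr htr.symm
    have h1 := hF _ hint
    have h2 := hF _ hf
    apply Lp.ext
    have h3 : 𝓕 ((Tr a f : L2) : ℝ → ℂ) = fun ω => ch a ω * 𝓕 (f : ℝ → ℂ) ω := by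
      rw [fourier_congr_ae htr, fourier_translate]
    filter_upwards [h1, coeFn_chMul a (F f), h2] with ω hω1 hω2 hω3
    rw [hω1, h3, hω2, hω3]
  have : Dense {f : L2 | F (Tr a f) = chMul a (F f)} := dense_integrable.mono hsub
  have := this.closure_eq
  rw [hclosed.closure_eq] at this
  exact Set.eq_univ_iff_forall.mp this f


lemma Tr_zero (f : L2) : Tr 0 f = f := by
  apply Lp.ext
  filter_upwards [coeFn_Tr 0 f] with x hx
  rw [hx]; simp

lemma self_mem_SIS (f : L2) : f ∈ SIS f := by
  apply subset_closure
  apply Submodule.subset_span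
  exact ⟨0, by rw [Int.cast_zero, Tr_zero]⟩

lemma span_repr (F : L2 ≃ₗᵢ[ℂ] L2) (hF : IsFourierTransform F) (φ : L2) (g : L2)
    (hg : g ∈ (Submodule.span ℂ {g : L2 | ∃ j : ℤ, g = Tr (j : ℝ) φ} : Submodule ℂ L2)) :
    ∃ p : ℝ → ℂ, Function.Periodic p 1 ∧
      (F g : ℝ → ℂ) =ᵐ[volume] fun ω => p ω * (F φ : ℝ → ℂ) ω := by
  induction hg using Submodule.span_induction with
  | mem x hx =>
    obtain ⟨j, rfl⟩ := hx
    refine ⟨ch (j : ℝ), ch_periodic j, ?_⟩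
    rw [FT_Tr F hF]
    exact coeFn_chMul _ _
  | zero =>
    refine ⟨0, fun x => rfl, ?_⟩
    rw [map_zero]
    filter_upwards [Lp.coeFn_zero ℂ 2 (volume : Measure ℝ)] with x hx
    simp [hx]
  | add x y hx hy ihx ihy =>
    obtain ⟨p, hp, hpe⟩ := ihx
    obtain ⟨q, hq, hqe⟩ := ihy
    refine ⟨p + q, hp.add hq, ?_⟩
    rw [map_add]
    filter_upwards [Lp.coeFn_add (F x) (F y), hpe, hqe] with ω h1 h2 h3
    simp only [h1, Pi.add_apply, h2, h3]; ring
  | smul c x hx ihx =>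
    obtain ⟨p, hp, hpe⟩ := ihx
    refine ⟨c • p, ?_, ?_⟩
    · intro t; simp [hp t]
    · rw [_root_.map_smul]
      filter_upwards [Lp.coeFn_smul c (F x), hpe] with ω h1 h2
      simp only [h1, Pi.smul_apply, h2, smul_eq_mul]; ring

lemma ch_div_int_eq_one {n : ℕ} (hn : 0 < n) (j : ℤ) (h : ch (1 / (n : ℝ)) (j : ℝ) = 1) :
    (n : ℤ) ∣ j := by
  have hn' : (n : ℝ) ≠ 0 := Nat.cast_ne_zero.mpr hn.ne'
  rw [ch, Real.fourierChar_apply] at h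
  obtain ⟨k, hk⟩ := Complex.exp_eq_one_iff.mp h
  have hk2 : ((2 * Real.pi * -(1 / (n : ℝ) * (j : ℝ)) : ℝ) : ℂ) * Complex.I
      = (((k : ℝ) * (2 * Real.pi) : ℝ) : ℂ) * Complex.I := by
    rw [hk]; push_cast; ring
  have hk' : (2 * Real.pi * -(1 / (n : ℝ) * (j : ℝ)) : ℝ) = (k : ℝ) * (2 * Real.pi) :=
    Complex.ofReal_injective (mul_right_cancel₀ Complex.I_ne_zero hk2)
  have htp : (2 * Real.pi) ≠ 0 := by positivity
  have h2 : -(1 / (n : ℝ) * (j : ℝ)) = (k : ℝ) := by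
    apply mul_left_cancel₀ htp
    rw [show (2 * Real.pi) * -(1 / (n : ℝ) * (j : ℝ)) = 2 * Real.pi * -(1 / (n : ℝ) * (j : ℝ)) from rfl, hk']
    ring
  have h3 : (j : ℝ) = ((n * -k : ℤ) : ℝ) := by
    push_cast
    field_simp at h2
    linarith
  exact ⟨-k, Int.cast_injective h3⟩

lemma key_dichotomy (F : L2 ≃ₗᵢ[ℂ] L2) (hF : IsFourierTransform F)
    (φ : L2) (n : ℕ) (hn : 1 < n)
    (hninv : ∀ f ∈ SIS φ, ∀ j : ℤ, Tr ((j : ℝ) / n) f ∈ SIS φ) :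
    ∃ N : Set ℝ, MeasurableSet N ∧ volume N = 0 ∧
      (∀ ω, ω ∉ N → ∀ k : ℤ, ω + (k : ℝ) ∉ N) ∧
      (∀ ω, ω ∉ N → ∀ j : ℤ, (F φ : ℝ → ℂ) ω ≠ 0 →
        (F φ : ℝ → ℂ) (ω + (j : ℝ)) ≠ 0 → (n : ℤ) ∣ j) := by
  classical
  set ψ : ℝ → ℂ := (F φ : ℝ → ℂ) with hψ
  have h1 : Tr (1 / (n : ℝ)) φ ∈ SIS φ := by
    have := hninv φ (self_mem_SIS φ) 1
    simpa using this
  rw [SIS] at h1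
  obtain ⟨x, hxmem, hxlim⟩ := mem_closure_iff_seq_limit.mp h1
  choose p hper hae using fun m => span_repr F hF φ (x m) (hxmem m)
  have hcont : Tendsto (fun m => F (x m)) atTop (𝓝 (F (Tr (1 / (n : ℝ)) φ))) :=
    (F.continuous.tendsto _).comp hxlim
  have htim : TendstoInMeasure volume (fun m => ((F (x m)) : ℝ → ℂ)) atTop
      ((F (Tr (1 / (n : ℝ)) φ)) : ℝ → ℂ) := tendstoInMeasure_of_tendsto_Lp hcont
  obtain ⟨ns, _hns, hnsae⟩ := htim.exists_seq_tendsto_ae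
  have hchm : F (Tr (1 / (n : ℝ)) φ) = chMul (1 / (n : ℝ)) (F φ) := FT_Tr F hF _ _
  set P : ℝ → Prop := fun ω =>
    Tendsto (fun i => p (ns i) ω * ψ ω) atTop (𝓝 (ch (1 / (n : ℝ)) ω * ψ ω)) with hP
  have hcomb : ∀ᵐ ω ∂(volume : Measure ℝ), P ω := by
    filter_upwards [hnsae, ae_all_iff.mpr fun i => hae (ns i),
      coeFn_chMul (1 / (n : ℝ)) (F φ)] with ω hA hB hC
    rw [hchm] at hA
    rw [hC] at hA
    exact hA.congr fun i => (hB i)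
  set N₀ : Set ℝ := toMeasurable volume {ω | ¬ P ω} with hN₀
  have hN₀meas : MeasurableSet N₀ := measurableSet_toMeasurable _ _
  have hN₀null : volume N₀ = 0 := by
    rw [hN₀, measure_toMeasurable]
    exact hcomb
  have hN₀P : ∀ ω, ω ∉ N₀ → P ω := by
    intro ω hω
    by_contra h
    exact hω (subset_toMeasurable _ _ h)
  set N : Set ℝ := ⋃ j : ℤ, (fun ω => ω + (j : ℝ)) ⁻¹' N₀ with hN
  have hNmeas : MeasurableSet N :=
    MeasurableSet.iUnion fun j => hN₀meas.preimage (measurable_add_const _)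
  have hNnull : volume N = 0 := by
    refine measure_iUnion_null fun j => ?_
    rw [(measurePreserving_add_right volume ((j : ℝ))).measure_preimage
      hN₀meas.nullMeasurableSet]
    exact hN₀null
  refine ⟨N, hNmeas, hNnull, ?_, ?_⟩
  · intro ω hω k hk
    apply hω
    rw [hN] at hk ⊢
    obtain ⟨S, ⟨j, rfl⟩, hj⟩ := hk
    simp only [Set.mem_preimage] at hj
    refine Set.mem_iUnion.mpr ⟨k + j, ?_⟩
    simp only [Set.mem_preimage]
    rw [show ω + ((k + j : ℤ) : ℝ) = ω + (k : ℝ) + (j : ℝ) by push_cast; ring]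
    exact hj
  · intro ω hω j hω0' hωj'
    have hω0 : ω ∉ N₀ := by
      intro h
      apply hω
      refine Set.mem_iUnion.mpr ⟨0, ?_⟩
      simpa using h
    have hωj : ω + (j : ℝ) ∉ N₀ := by
      intro h
      apply hω
      exact Set.mem_iUnion.mpr ⟨j, h⟩
    have hPω := hN₀P ω hω0
    have hPωj := hN₀P _ hωj
    rw [hP] at hPω hPωj
    -- divide by nonzero ψ values
    have hlim1 : Tendsto (fun i => p (ns i) ω) atTop (𝓝 (ch (1 / (n : ℝ)) ω)) := by
      have := hPω.mul_const (ψ ω)⁻¹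
      simp only [mul_assoc, mul_inv_cancel₀ hω0', mul_one] at this
      exact this
    have hlim2 : Tendsto (fun i => p (ns i) (ω + (j : ℝ))) atTop
        (𝓝 (ch (1 / (n : ℝ)) (ω + (j : ℝ)))) := by
      have := hPωj.mul_const (ψ (ω + (j : ℝ)))⁻¹
      simp only [mul_assoc, mul_inv_cancel₀ hωj', mul_one] at this
      exact this
    have hper' : ∀ i, p (ns i) (ω + (j : ℝ)) = p (ns i) ω := by
      intro i
      have := ((hper (ns i)).int_mul j) ω
      simpa using this
    have hlim2' : Tendsto (fun i => p (ns i) ω) atTop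
        (𝓝 (ch (1 / (n : ℝ)) (ω + (j : ℝ)))) := hlim2.congr fun i => hper' i
    have hequ : ch (1 / (n : ℝ)) ω = ch (1 / (n : ℝ)) (ω + (j : ℝ)) :=
      tendsto_nhds_unique hlim1 hlim2'
    rw [ch_add] at hequ
    have : ch (1 / (n : ℝ)) (j : ℝ) = 1 := by
      have h0 := ch_ne_zero (1 / (n : ℝ)) ω
      have h1 : ch (1 / (n : ℝ)) ω * ch (1 / (n : ℝ)) (j : ℝ)
          = ch (1 / (n : ℝ)) ω * 1 := by rw [mul_one, ← hequ]
      exact mul_left_cancel₀ h0 h1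
    exact ch_div_int_eq_one (by omega) j this

lemma nonzero_measure_le_one (F : L2 ≃ₗᵢ[ℂ] L2) (hF : IsFourierTransform F)
    (φ : L2) (n : ℕ) (hn : 1 < n)
    (hninv : ∀ f ∈ SIS φ, ∀ j : ℤ, Tr ((j : ℝ) / n) f ∈ SIS φ) (a : ℝ) :
    volume ({ω : ℝ | (F φ : ℝ → ℂ) ω ≠ 0} ∩ Set.Ioo a (a + n)) ≤ 1 := by
  classical
  set ψ : ℝ → ℂ := (F φ : ℝ → ℂ) with hψ
  have hm : Measurable ψ := (Lp.stronglyMeasurable (F φ)).measurable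
  set W : Set ℝ := {ω | ψ ω ≠ 0} with hW
  have hWmeas : MeasurableSet W := (hm (measurableSet_singleton 0)).compl
  obtain ⟨N, hNmeas, hNnull, hNtr, hNmain⟩ := key_dichotomy F hF φ n hn hninv
  set A : ℕ → Set ℝ := fun k => ((fun ω => ω + (k : ℝ)) ⁻¹' W) ∩ Set.Ioo a (a + 1) ∩ Nᶜ
    with hA
  have hAmeas : ∀ k, MeasurableSet (A k) := fun k =>
    ((hWmeas.preimage (measurable_add_const _)).inter measurableSet_Ioo).inter hNmeas.compl
  have hdisj : ∀ k ∈ Finset.range n, ∀ l ∈ Finset.range n, k ≠ l → Disjoint (A k) (A l) := by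
    have key : ∀ k l : ℕ, k < l → l < n → Disjoint (A k) (A l) := by
      intro k l hkl hln
      rw [Set.disjoint_left]
      rintro ω ⟨⟨hk1, _⟩, hkN⟩ ⟨⟨hl1, _⟩, _⟩
      simp only [Set.mem_preimage, Set.mem_compl_iff] at hk1 hl1 hkN
      have hbase : ω + (k : ℝ) ∉ N := hNtr ω hkN k
      have hdvd : (n : ℤ) ∣ ((l : ℤ) - (k : ℤ)) := by
        apply hNmain _ hbase ((l : ℤ) - (k : ℤ)) hk1
        rw [show ω + (k : ℝ) + (((l : ℤ) - (k : ℤ) : ℤ) : ℝ) = ω + (l : ℝ) by push_cast; ring]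
        exact hl1
      have hpos : (0 : ℤ) < (l : ℤ) - (k : ℤ) := by omega
      have := Int.le_of_dvd hpos hdvd
      omega
    intro k hk l hl hkl
    rcases lt_or_gt_of_ne hkl with h | h
    · exact key k l h (Finset.mem_range.mp hl)
    · exact (key l k h (Finset.mem_range.mp hk)).symm
  have hsum : ∑ k ∈ Finset.range n, volume (A k) ≤ 1 := by
    rw [← measure_biUnion_finset hdisj fun k _ => hAmeas k]
    calc volume (⋃ k ∈ Finset.range n, A k) ≤ volume (Set.Ioo a (a + 1)) := by
          apply measure_mono
          intro ω hω
          simp only [Set.mem_iUnion] at hω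
          obtain ⟨k, _, ⟨_, h2⟩, _⟩ := hω
          exact h2
      _ = 1 := by rw [Real.volume_Ioo]; simp
  have hkvol : ∀ k : ℕ, volume (W ∩ Set.Ioo (a + k) (a + k + 1)) ≤ volume (A k) := by
    intro k
    have hmp := measurePreserving_add_right (volume : Measure ℝ) ((k : ℝ))
    have hpre : (fun ω => ω + (k : ℝ)) ⁻¹' (W ∩ Set.Ioo (a + k) (a + k + 1))
        = ((fun ω => ω + (k : ℝ)) ⁻¹' W) ∩ Set.Ioo a (a + 1) := by
      ext ω
      simp only [Set.mem_preimage, Set.mem_inter_iff, Set.mem_Ioo]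
      constructor
      · rintro ⟨h1, h2, h3⟩; exact ⟨h1, by linarith, by linarith⟩
      · rintro ⟨h1, h2, h3⟩; exact ⟨h1, by linarith, by linarith⟩
    have hvol : volume (W ∩ Set.Ioo (a + k) (a + k + 1))
        = volume (((fun ω => ω + (k : ℝ)) ⁻¹' W) ∩ Set.Ioo a (a + 1)) := by
      rw [← hpre, hmp.measure_preimage (hWmeas.inter measurableSet_Ioo).nullMeasurableSet]
    rw [hvol]
    have hsub : ((fun ω => ω + (k : ℝ)) ⁻¹' W) ∩ Set.Ioo a (a + 1) ⊆ A k ∪ N := by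
      intro ω hω
      by_cases hωN : ω ∈ N
      · exact Or.inr hωN
      · exact Or.inl ⟨hω, hωN⟩
    calc volume (((fun ω => ω + (k : ℝ)) ⁻¹' W) ∩ Set.Ioo a (a + 1))
        ≤ volume (A k ∪ N) := measure_mono hsub
      _ ≤ volume (A k) + volume N := measure_union_le _ _
      _ = volume (A k) := by rw [hNnull, add_zero]
  have hcover : W ∩ Set.Ioo a (a + n) ⊆
      (⋃ k ∈ Finset.range n, W ∩ Set.Ioo (a + k) (a + k + 1)) ∪
      (⋃ k ∈ Finset.range (n + 1), {a + (k : ℝ)}) := by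
    rintro ω ⟨hωW, hω1, hω2⟩
    set t : ℝ := ω - a with ht
    have ht1 : 0 < t := by simp [ht]; linarith
    have ht2 : t < n := by simp [ht]; linarith
    have h0 : 0 ≤ ⌊t⌋ := Int.floor_nonneg.mpr ht1.le
    have hkn : ⌊t⌋ < (n : ℤ) := Int.floor_lt.mpr (by exact_mod_cast ht2)
    set k : ℕ := ⌊t⌋.toNat with hk
    have hkr : (k : ℝ) = (⌊t⌋ : ℝ) := by exact_mod_cast Int.toNat_of_nonneg h0
    have hknn : k < n := by omega
    by_cases heq : (⌊t⌋ : ℝ) = t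
    · right
      simp only [Set.mem_iUnion, Set.mem_singleton_iff]
      refine ⟨k, Finset.mem_range.mpr (by omega), ?_⟩
      rw [hkr, heq]; simp [ht]
    · left
      simp only [Set.mem_iUnion]
      refine ⟨k, Finset.mem_range.mpr hknn, hωW, ?_, ?_⟩
      · have hle : (⌊t⌋ : ℝ) ≤ t := Int.floor_le t
        have hlt : (⌊t⌋ : ℝ) < t := lt_of_le_of_ne hle heq
        rw [hkr]; simp only [ht] at hlt ⊢; linarith
      · have := Int.lt_floor_add_one t
        rw [hkr]; simp only [ht] at this ⊢; linarith
  calc volume (W ∩ Set.Ioo a (a + n))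
      ≤ volume ((⋃ k ∈ Finset.range n, W ∩ Set.Ioo (a + k) (a + k + 1)) ∪
          (⋃ k ∈ Finset.range (n + 1), {a + (k : ℝ)})) := measure_mono hcover
    _ ≤ volume (⋃ k ∈ Finset.range n, W ∩ Set.Ioo (a + k) (a + k + 1)) +
          volume (⋃ k ∈ Finset.range (n + 1), {a + (k : ℝ)}) := measure_union_le _ _
    _ = volume (⋃ k ∈ Finset.range n, W ∩ Set.Ioo (a + k) (a + k + 1)) := by
        have h0 : volume (⋃ k ∈ Finset.range (n + 1), ({a + (k : ℝ)} : Set ℝ)) = 0 := by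
          refine measure_biUnion_null_iff (Finset.countable_toSet _) |>.mpr ?_
          intro k _
          exact measure_singleton _
        rw [h0, add_zero]
    _ ≤ ∑ k ∈ Finset.range n, volume (W ∩ Set.Ioo (a + k) (a + k + 1)) :=
        measure_biUnion_finset_le _ _
    _ ≤ ∑ k ∈ Finset.range n, volume (A k) := Finset.sum_le_sum fun k _ => hkvol k
    _ ≤ 1 := hsum


/-- If `S(φ)` is `(1/n)ℤ`-invariant for some `n > 1`, then on every interval of length `n`
the Fourier transform `φ̂` vanishes on a set of measure at least `n - 1`; in particular
`φ̂` vanishes on a set of infinite Lebesgue measure. -/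
theorem stmt16 (F : L2 ≃ₗᵢ[ℂ] L2) (hF : IsFourierTransform F)
    (φ : L2) (n : ℕ) (hn : 1 < n)
    (hninv : ∀ f ∈ SIS φ, ∀ j : ℤ, Tr ((j : ℝ) / n) f ∈ SIS φ) :
    (∀ a : ℝ, ENNReal.ofReal ((n : ℝ) - 1) ≤
        volume ({ω : ℝ | (F φ : ℝ → ℂ) ω = 0} ∩ Set.Ioo a (a + n))) ∧
    volume {ω : ℝ | (F φ : ℝ → ℂ) ω = 0} = ⊤ := by
  classical
  set ψ : ℝ → ℂ := (F φ : ℝ → ℂ) with hψ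
  have hm : Measurable ψ := (Lp.stronglyMeasurable (F φ)).measurable
  set Z : Set ℝ := {ω : ℝ | ψ ω = 0} with hZdef
  have hZ : MeasurableSet Z := hm (measurableSet_singleton 0)
  have hpart1 : ∀ a : ℝ, ENNReal.ofReal ((n : ℝ) - 1) ≤ volume (Z ∩ Set.Ioo a (a + n)) := by
    intro a
    set I : Set ℝ := Set.Ioo a (a + n) with hI
    have hvolI : volume I = ENNReal.ofReal n := by
      rw [hI, Real.volume_Ioo]; ring_nf
    have hsplit : volume (I ∩ Z) + volume (I \ Z) = volume I := measure_inter_add_diff I hZ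
    have hdiff : I \ Z = {ω : ℝ | ψ ω ≠ 0} ∩ I := by
      ext ω; simp only [Set.mem_diff, Set.mem_inter_iff, Set.mem_setOf_eq, hZdef]
      tauto
    have hle1 : volume (I \ Z) ≤ 1 := by
      rw [hdiff]
      exact nonzero_measure_le_one F hF φ n hn hninv a
    have hof : ENNReal.ofReal ((n : ℝ) - 1) = ENNReal.ofReal n - 1 := by
      rw [ENNReal.ofReal_sub _ (by norm_num), ENNReal.ofReal_one]
    rw [hof, Set.inter_comm Z I]
    rw [tsub_le_iff_right]
    calc ENNReal.ofReal n = volume I := hvolI.symm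
      _ = volume (I ∩ Z) + volume (I \ Z) := hsplit.symm
      _ ≤ volume (I ∩ Z) + 1 := by exact add_le_add_right hle1 _
  refine ⟨hpart1, ?_⟩
  set S : ℕ → Set ℝ := fun m => Z ∩ Set.Ioo ((m : ℝ) * n) ((m : ℝ) * n + n) with hS
  have hSmeas : ∀ m, MeasurableSet (S m) := fun m => hZ.inter measurableSet_Ioo
  have hSdisj : Pairwise (Function.onFun Disjoint S) := by
    have key : ∀ m m' : ℕ, m < m' → Disjoint (S m) (S m') := by
      intro m m' hmm
      rw [Set.disjoint_left]
      rintro x ⟨_, _, hx2⟩ ⟨_, hx3, _⟩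
      have hcast : ((m : ℝ) + 1) * n ≤ (m' : ℝ) * n := by
        apply mul_le_mul_of_nonneg_right _ (by positivity)
        exact_mod_cast Nat.succ_le_of_lt hmm
      nlinarith
    intro m m' hmm
    rcases lt_or_gt_of_ne hmm with h | h
    · exact key m m' h
    · exact (key m' m h).symm
  have hunion : volume (⋃ m, S m) = ∑' m, volume (S m) := measure_iUnion hSdisj hSmeas
  have htop : (⊤ : ENNReal) ≤ volume Z := by
    calc (⊤ : ENNReal) = ∑' _ : ℕ, ENNReal.ofReal ((n : ℝ) - 1) := by
          rw [ENNReal.tsum_const_eq_top_of_ne_zero]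
          intro h
          rw [ENNReal.ofReal_eq_zero] at h
          have : (1 : ℝ) < n := by exact_mod_cast hn
          linarith
      _ ≤ ∑' m, volume (S m) := ENNReal.tsum_le_tsum fun m => hpart1 ((m : ℝ) * n)
      _ = volume (⋃ m, S m) := hunion.symm
      _ ≤ volume Z := measure_mono (Set.iUnion_subset fun m => Set.inter_subset_left)
  exact top_le_iff.mp htop
end
end

section
/- If φ ∈ L²(ℝ) and the shift-invariant space S(φ) generated by the integer translates of φ is invariant under all real translations, then the Lebesgue measure of the support of φ̂ is at most 1. Moreover, Σ_{k∈ℤ} χ_{supp(φ̂)}(ω+k) ≤ 1 for a.e. ω, i.e., supp(φ̂) is contained (up to measure zero) in a set of representatives of ℝ/ℤ. -/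
open MeasureTheory FourierTransform

noncomputable section

open Real Filter Set

namespace Stmt18Aux

/-- The modulation character `ω ↦ e^{-2πiaω}`. -/
def ch (a : ℝ) : ℝ → ℂ := fun ω => (𝐞 (-(a * ω)) : ℂ)

lemma ch_eq (a ω : ℝ) : ch a ω = Complex.exp ((2 * π * -(a * ω) : ℝ) * Complex.I) := by
  rw [ch, Real.fourierChar_apply]

lemma ch_norm (a ω : ℝ) : ‖ch a ω‖ = 1 := by simp [ch, Circle.norm_coe]

lemma ch_continuous (a : ℝ) : Continuous (ch a) := by
  have : ch a = fun ω => Complex.exp ((2 * π * -(a * ω) : ℝ) * Complex.I) := funext (ch_eq a)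
  rw [this]
  exact ((Complex.continuous_ofReal.comp (by continuity)).mul continuous_const).cexp

lemma ch_int (j : ℤ) (ω : ℝ) (n : ℤ) : ch (j : ℝ) (ω + (n : ℝ)) = ch (j : ℝ) ω := by
  rw [ch_eq, ch_eq, ← mul_one (Complex.exp ((2 * π * -((j:ℝ) * ω) : ℝ) * Complex.I)),
    ← Complex.exp_int_mul_two_pi_mul_I (-(j*n)), ← Complex.exp_add]
  congr 1
  push_cast
  ring

lemma ch_eq_imp {a x y : ℝ} (h : ch a x = ch a y) : ∃ n : ℤ, a * x - a * y = n := by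
  rw [ch_eq, ch_eq] at h
  obtain ⟨n, hn⟩ := Complex.exp_eq_exp_iff_exists_int.1 h
  refine ⟨-n, ?_⟩
  have h2 : ((2 * π * -(a * x) : ℝ) : ℂ) = ((2 * π * -(a * y) + n * (2 * π) : ℝ) : ℂ) := by
    apply mul_right_cancel₀ Complex.I_ne_zero
    rw [hn]; push_cast; ring
  have h3 := Complex.ofReal_inj.1 h2
  have hπ : (2 * π : ℝ) ≠ 0 := by positivity
  have h4 : 2 * π * (a * x - a * y) = 2 * π * (-n : ℝ) := by push_cast at h3 ⊢; linarith
  have := mul_left_cancel₀ hπ h4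
  push_cast
  linarith

lemma chMul_memℒp (a : ℝ) (g : L2) :
    MemLp (fun ω => ch a ω * (g : ℝ → ℂ) ω) 2 (volume : Measure ℝ) := by
  refine ⟨((ch_continuous a).aestronglyMeasurable).mul (Lp.aestronglyMeasurable g), ?_⟩
  have h : eLpNorm (fun ω => ch a ω * (g : ℝ → ℂ) ω) 2 volume = eLpNorm (g : ℝ → ℂ) 2 volume :=
    eLpNorm_congr_norm_ae (ae_of_all _ fun ω => by rw [norm_mul, ch_norm, one_mul])
  rw [h]; exact Lp.eLpNorm_lt_top g

/-- Multiplication by the character `ch a` as a map `L² → L²`. -/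
def chMul (a : ℝ) (g : L2) : L2 := (chMul_memℒp a g).toLp _

lemma chMul_coe (a : ℝ) (g : L2) :
    ⇑(chMul a g) =ᵐ[volume] fun ω => ch a ω * (g : ℝ → ℂ) ω := MemLp.coeFn_toLp _

lemma chMul_isometry (a : ℝ) : Isometry (chMul a) := by
  apply Isometry.of_dist_eq
  intro g h
  rw [Lp.dist_def, Lp.dist_def]
  refine congrArg ENNReal.toReal (eLpNorm_congr_norm_ae ?_)
  filter_upwards [chMul_coe a g, chMul_coe a h] with ω h1 h2
  rw [Pi.sub_apply, Pi.sub_apply, h1, h2, ← mul_sub, norm_mul, ch_norm, one_mul]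

lemma chMul_add (a : ℝ) (g h : L2) : chMul a (g + h) = chMul a g + chMul a h := by
  apply Lp.ext
  filter_upwards [chMul_coe a (g + h), chMul_coe a g, chMul_coe a h, Lp.coeFn_add g h,
    Lp.coeFn_add (chMul a g) (chMul a h)] with ω h1 h2 h3 h4 h5
  rw [h1, h4, h5, Pi.add_apply, Pi.add_apply, h2, h3, mul_add]

lemma fourier_congr {f g : ℝ → ℂ} (h : f =ᵐ[volume] g) : 𝓕 f = 𝓕 g := by
  funext w
  simp only [Real.fourier_eq]
  exact integral_congr_ae (h.mono fun x hx => by simp only [hx])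

lemma fourier_translate (a : ℝ) (f : ℝ → ℂ) :
    𝓕 (fun x => f (x - a)) = fun w => ch a w * 𝓕 f w := by
  have h := VectorFourier.fourierIntegral_comp_add_right 𝐞 (volume : Measure ℝ) (innerₗ ℝ) f (-a)
  have heq : (f ∘ fun v => v + (-a)) = fun x => f (x - a) := by
    funext x; simp [sub_eq_add_neg]
  rw [heq] at h
  funext w
  have h0 : 𝓕 (fun x => f (x - a)) w
      = VectorFourier.fourierIntegral 𝐞 volume (innerₗ ℝ) (fun x => f (x - a)) w := rfl
  rw [h0, h]
  have hinner : (innerₗ ℝ) (-a) w = -(a * w) := by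
    rw [map_neg, LinearMap.neg_apply, innerₗ_apply_apply, RCLike.inner_apply, conj_trivial, mul_comm]
  dsimp only
  rw [Circle.smul_def, hinner]
  rfl

lemma Tr_coe (a : ℝ) (f : L2) : ⇑(Tr a f) =ᵐ[volume] fun x => (f : ℝ → ℂ) (x - a) :=
  Lp.coeFn_compMeasurePreserving f _

lemma F_Tr_int (F : L2 ≃ₗᵢ[ℂ] L2) (hF : IsFourierTransform F) (a : ℝ) (f : L2)
    (hf : Integrable (f : ℝ → ℂ) volume) : F (Tr a f) = chMul a (F f) := by
  have hTr := Tr_coe a f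
  have hint : Integrable (⇑(Tr a f)) volume := (hf.comp_sub_right a).congr hTr.symm
  have h2 : 𝓕 (⇑(Tr a f)) = 𝓕 (fun x => (f : ℝ → ℂ) (x - a)) := fourier_congr hTr
  have h3 := fourier_translate a (f : ℝ → ℂ)
  apply Lp.ext
  filter_upwards [hF _ hint, chMul_coe a (F f), hF f hf] with ω e1 e2 e3
  calc (F (Tr a f) : ℝ → ℂ) ω = 𝓕 (⇑(Tr a f)) ω := e1
    _ = 𝓕 (fun x => (f : ℝ → ℂ) (x - a)) ω := by rw [h2]
    _ = ch a ω * 𝓕 (f : ℝ → ℂ) ω := by rw [h3]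
    _ = ch a ω * (F f : ℝ → ℂ) ω := by rw [e3]
    _ = (chMul a (F f) : ℝ → ℂ) ω := e2.symm

lemma F_Tr (F : L2 ≃ₗᵢ[ℂ] L2) (hF : IsFourierTransform F) (a : ℝ) (f : L2) :
    F (Tr a f) = chMul a (F f) := by
  revert f
  refine Lp.induction (E := ℂ) (μ := (volume : Measure ℝ)) (p := 2) ENNReal.ofNat_ne_top
    (fun f => F (Tr a f) = chMul a (F f)) ?_ ?_ ?_
  · intro c s hs hμs
    refine F_Tr_int F hF a _ ?_
    have hco : (↑(Lp.simpleFunc.indicatorConst 2 hs hμs.ne c) : L2)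
        = indicatorConstLp 2 hs hμs.ne c := Lp.simpleFunc.coe_indicatorConst _ _ _
    rw [hco]
    have : Integrable (s.indicator fun _ => c) volume :=
      (integrable_indicator_iff hs).2 (integrableOn_const hμs.ne)
    exact this.congr (indicatorConstLp_coeFn).symm
  · intro f g hf hg _ h1 h2
    have hT : Tr a (hf.toLp f + hg.toLp g) = Tr a (hf.toLp f) + Tr a (hg.toLp g) := by
      simp only [Tr, map_add]
    rw [hT, map_add, map_add, h1, h2, chMul_add]
  · have hc1 : Continuous fun f : L2 => F (Tr a f) :=
      F.continuous.comp
        ((Lp.isometry_compMeasurePreserving (measurePreserving_sub_right volume a)).continuous)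
    have hc2 : Continuous fun f : L2 => chMul a (F f) :=
      (chMul_isometry a).continuous.comp F.continuous
    exact isClosed_eq hc1 hc2

lemma Tr_zero (f : L2) : Tr (0:ℝ) f = f := by
  apply Lp.ext
  filter_upwards [Tr_coe 0 f] with x hx
  rw [hx, sub_zero]

lemma phi_mem_SIS (φ : L2) : φ ∈ SIS φ := by
  refine subset_closure (Submodule.subset_span ?_)
  exact ⟨0, by rw [Int.cast_zero, Tr_zero]⟩

lemma F_mem_closure_span (F : L2 ≃ₗᵢ[ℂ] L2) (φ : L2) {f : L2} (hf : f ∈ SIS φ) :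
    F f ∈ closure ((Submodule.span ℂ (⇑F '' {g : L2 | ∃ j : ℤ, g = Tr (j : ℝ) φ})) : Set L2) := by
  have h1 : F f ∈ ⇑F '' SIS φ := ⟨f, hf, rfl⟩
  have h2 : ⇑F '' SIS φ
      = closure (⇑F '' ((Submodule.span ℂ {g : L2 | ∃ j : ℤ, g = Tr (j : ℝ) φ}) : Set L2)) := by
    rw [SIS]
    exact F.toHomeomorph.image_closure _
  have h3 : ⇑F '' ((Submodule.span ℂ {g : L2 | ∃ j : ℤ, g = Tr (j : ℝ) φ}) : Set L2)
      = ((Submodule.span ℂ (⇑F '' {g : L2 | ∃ j : ℤ, g = Tr (j : ℝ) φ})) : Set L2) := by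
    have := Submodule.map_span (F.toLinearEquiv : L2 →ₗ[ℂ] L2)
      {g : L2 | ∃ j : ℤ, g = Tr (j : ℝ) φ}
    have hc : ((Submodule.map (F.toLinearEquiv : L2 →ₗ[ℂ] L2)
        (Submodule.span ℂ {g : L2 | ∃ j : ℤ, g = Tr (j : ℝ) φ})) : Set L2)
        = ⇑F '' ((Submodule.span ℂ {g : L2 | ∃ j : ℤ, g = Tr (j : ℝ) φ}) : Set L2) := rfl
    rw [← hc, this]
    rfl
  rw [h2, h3] at h1
  exact h1

lemma span_rep (F : L2 ≃ₗᵢ[ℂ] L2) (hF : IsFourierTransform F) (φ : L2) {g : L2}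
    (hg : g ∈ Submodule.span ℂ (⇑F '' {g : L2 | ∃ j : ℤ, g = Tr (j : ℝ) φ})) :
    ∃ P : ℝ → ℂ, (∀ ω : ℝ, ∀ n : ℤ, P (ω + (n:ℝ)) = P ω) ∧
      ⇑g =ᵐ[volume] fun ω => P ω * (F φ : ℝ → ℂ) ω := by
  induction hg using Submodule.span_induction with
  | mem x hx =>
      obtain ⟨y, ⟨j, rfl⟩, rfl⟩ := hx
      refine ⟨ch (j : ℝ), fun ω n => ch_int j ω n, ?_⟩
      rw [F_Tr F hF (j : ℝ) φ]
      exact chMul_coe _ _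
  | zero =>
      refine ⟨0, by simp, ?_⟩
      filter_upwards [Lp.coeFn_zero ℂ 2 (volume : Measure ℝ)] with ω h
      simp [h]
  | add x y hx hy ihx ihy =>
      obtain ⟨P, hP, hPe⟩ := ihx
      obtain ⟨Q, hQ, hQe⟩ := ihy
      refine ⟨P + Q, fun ω n => by simp [hP ω n, hQ ω n], ?_⟩
      filter_upwards [Lp.coeFn_add x y, hPe, hQe] with ω h1 h2 h3
      simp only [h1, Pi.add_apply, h2, h3]
      ring
  | smul c x hx ih =>
      obtain ⟨P, hP, hPe⟩ := ih
      refine ⟨c • P, fun ω n => by simp [hP ω n], ?_⟩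
      filter_upwards [Lp.coeFn_smul c x, hPe] with ω h1 h2
      simp only [h1, Pi.smul_apply, h2, smul_eq_mul]
      ring

lemma ae_shift {p : ℝ → Prop} (h : ∀ᵐ ω ∂(volume : Measure ℝ), p ω) (c : ℝ) :
    ∀ᵐ ω ∂(volume : Measure ℝ), p (ω + c) := by
  rw [← map_add_right_ae volume c] at h
  exact h

lemma key_pair (F : L2 ≃ₗᵢ[ℂ] L2) (hF : IsFourierTransform F) (φ : L2)
    (hTI : ∀ θ : ℝ, ∀ f ∈ SIS φ, Tr θ f ∈ SIS φ) (k l : ℤ) (hkl : k ≠ l) :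
    ∀ᵐ ω ∂(volume : Measure ℝ),
      ¬((F φ : ℝ → ℂ) (ω + (k:ℝ)) ≠ 0 ∧ (F φ : ℝ → ℂ) (ω + (l:ℝ)) ≠ 0) := by
  set ψ : ℝ → ℂ := (F φ : ℝ → ℂ) with hψ
  have hklR : (k:ℝ) - l ≠ 0 := sub_ne_zero.2 (by exact_mod_cast hkl)
  set θ : ℝ := (2 * ((k:ℝ) - l))⁻¹ with hθdef
  have hmem := F_mem_closure_span F φ (hTI θ φ (phi_mem_SIS φ))
  obtain ⟨u, hu, hconv⟩ := mem_closure_iff_seq_limit.1 hmem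
  choose P hPper hPrep using fun n => span_rep F hF φ (hu n)
  obtain ⟨ns, hmono, hae⟩ := (tendstoInMeasure_of_tendsto_Lp hconv).exists_seq_tendsto_ae
  have hθcoe : ⇑(F (Tr θ φ)) =ᵐ[volume] fun ω => ch θ ω * ψ ω := by
    rw [F_Tr F hF θ φ]; exact chMul_coe θ (F φ)
  have hS : ∀ᵐ ω ∂(volume : Measure ℝ),
      Tendsto (fun i => P (ns i) ω * ψ ω) atTop (nhds (ch θ ω * ψ ω)) := by
    filter_upwards [hae, ae_all_iff.2 (fun n => hPrep n), hθcoe] with ω h1 h2 h3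
    rw [← h3]
    exact h1.congr fun i => h2 (ns i)
  filter_upwards [ae_shift hS (k:ℝ), ae_shift hS (l:ℝ)] with ω hk hl
  rintro ⟨hψk, hψl⟩
  have hper : ∀ i, P (ns i) (ω + (k:ℝ)) = P (ns i) (ω + (l:ℝ)) := by
    intro i
    have h1 : ω + (k:ℝ) = (ω + (l:ℝ)) + ((k - l : ℤ) : ℝ) := by push_cast; ring
    rw [h1, hPper (ns i) _ (k - l)]
  have limk : Tendsto (fun i => P (ns i) (ω + (l:ℝ))) atTop (nhds (ch θ (ω + (k:ℝ)))) := by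
    have h := hk.mul_const (ψ (ω + (k:ℝ)))⁻¹
    simp only [mul_assoc, mul_inv_cancel₀ hψk, mul_one] at h
    exact h.congr fun i => hper i
  have liml : Tendsto (fun i => P (ns i) (ω + (l:ℝ))) atTop (nhds (ch θ (ω + (l:ℝ)))) := by
    have h := hl.mul_const (ψ (ω + (l:ℝ)))⁻¹
    simpa only [mul_assoc, mul_inv_cancel₀ hψl, mul_one] using h
  have heq : ch θ (ω + (k:ℝ)) = ch θ (ω + (l:ℝ)) := tendsto_nhds_unique limk liml
  obtain ⟨n, hn⟩ := ch_eq_imp heq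
  have h12 : θ * (ω + (k:ℝ)) - θ * (ω + (l:ℝ)) = 1/2 := by
    rw [hθdef]
    field_simp
    ring
  rw [h12] at hn
  have h2n : ((2 * n : ℤ) : ℝ) = ((1 : ℤ) : ℝ) := by push_cast; linarith
  have := Int.cast_injective h2n
  omega

end Stmt18Aux

open Stmt18Aux

/-- If `S(φ)` is invariant under all real translations, then `|supp φ̂| ≤ 1`; moreover
`Σ_{k∈ℤ} χ_{supp φ̂}(ω+k) ≤ 1` for a.e. `ω`, i.e. `supp φ̂` is (up to null sets) contained
in a set of representatives of `ℝ/ℤ`. -/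
theorem stmt18 (F : L2 ≃ₗᵢ[ℂ] L2) (hF : IsFourierTransform F)
    (φ : L2) (hTI : ∀ θ : ℝ, ∀ f ∈ SIS φ, Tr θ f ∈ SIS φ) :
    volume {ω : ℝ | (F φ : ℝ → ℂ) ω ≠ 0} ≤ 1 ∧
    ∀ᵐ ω ∂(volume : Measure ℝ),
      (∑' k : ℤ, ({ω' : ℝ | (F φ : ℝ → ℂ) ω' ≠ 0}.indicator
        (fun _ => (1 : ENNReal)) (ω + k))) ≤ 1 := by
  set ψ : ℝ → ℂ := (F φ : ℝ → ℂ) with hψ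
  set E : Set ℝ := {ω' : ℝ | ψ ω' ≠ 0} with hE
  have hmeas : MeasurableSet E := by
    have hm : Measurable ψ := (Lp.stronglyMeasurable (F φ)).measurable
    exact hm (measurableSet_singleton 0).compl
  have hpair : ∀ᵐ ω ∂(volume : Measure ℝ),
      ∀ k l : ℤ, k ≠ l → ¬(ψ (ω + (k:ℝ)) ≠ 0 ∧ ψ (ω + (l:ℝ)) ≠ 0) := by
    rw [ae_all_iff]
    intro k
    rw [ae_all_iff]
    intro l
    by_cases hkl : k = l
    · exact ae_of_all _ fun ω h => absurd hkl h
    · filter_upwards [key_pair F hF φ hTI k l hkl] with ω h _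
      exact h
  have hbound : ∀ᵐ ω ∂(volume : Measure ℝ),
      (∑' k : ℤ, E.indicator (fun _ => (1 : ENNReal)) (ω + (k:ℝ))) ≤ 1 := by
    filter_upwards [hpair] with ω h
    by_cases hex : ∃ k : ℤ, ω + (k:ℝ) ∈ E
    · obtain ⟨k₀, hk₀⟩ := hex
      have hz : ∀ k : ℤ, k ≠ k₀ → E.indicator (fun _ => (1 : ENNReal)) (ω + (k:ℝ)) = 0 := by
        intro k hk
        refine Set.indicator_of_notMem (fun hmem => ?_) _
        exact (h k k₀ hk) ⟨hmem, hk₀⟩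
      rw [tsum_eq_single k₀ hz, Set.indicator_of_mem hk₀]
    · push_neg at hex
      have hz : ∀ k : ℤ, E.indicator (fun _ => (1 : ENNReal)) (ω + (k:ℝ)) = 0 := fun k =>
        Set.indicator_of_notMem (hex k) _
      rw [tsum_congr hz, tsum_zero]
      exact zero_le_one
  refine ⟨?_, hbound⟩
  -- measure bound
  have hcover : E = ⋃ k : ℤ, E ∩ Set.Ioc (k:ℝ) ((k:ℝ) + 1) := by
    rw [← Set.inter_iUnion]
    rw [iUnion_Ioc_intCast (α := ℝ)]
    rw [Set.inter_univ]
  have hdisj : Pairwise (Function.onFun Disjoint fun k : ℤ => E ∩ Set.Ioc (k:ℝ) ((k:ℝ) + 1)) := by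
    intro k l hkl
    refine Set.disjoint_of_subset Set.inter_subset_right Set.inter_subset_right ?_
    rw [Set.Ioc_disjoint_Ioc]
    rcases hkl.lt_or_gt with h | h
    · have : (k:ℝ) + 1 ≤ (l:ℝ) := by exact_mod_cast Int.add_one_le_iff.2 h
      simp only [min_le_iff, le_max_iff]
      right; left; linarith
    · have : (l:ℝ) + 1 ≤ (k:ℝ) := by exact_mod_cast Int.add_one_le_iff.2 h
      simp only [min_le_iff, le_max_iff]
      left; right; linarith
  have hk : ∀ k : ℤ, volume (E ∩ Set.Ioc (k:ℝ) ((k:ℝ) + 1))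
      = ∫⁻ ω in Set.Ioc (0:ℝ) 1, E.indicator (fun _ => (1 : ENNReal)) (ω + (k:ℝ)) := by
    intro k
    have hA : MeasurableSet ((fun ω : ℝ => ω + (k:ℝ)) ⁻¹' E) :=
      hmeas.preimage (measurable_add_const _)
    have h1 : (fun ω : ℝ => ω + (k:ℝ)) ⁻¹' (E ∩ Set.Ioc (k:ℝ) ((k:ℝ) + 1))
        = ((fun ω : ℝ => ω + (k:ℝ)) ⁻¹' E) ∩ Set.Ioc 0 1 := by
      ext x
      simp only [Set.mem_preimage, Set.mem_inter_iff, Set.mem_Ioc]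
      constructor
      · rintro ⟨h1, h2, h3⟩; exact ⟨h1, by linarith, by linarith⟩
      · rintro ⟨h1, h2, h3⟩; exact ⟨h1, by linarith, by linarith⟩
    have h2 : ∀ ω : ℝ, E.indicator (fun _ => (1 : ENNReal)) (ω + (k:ℝ))
        = ((fun ω : ℝ => ω + (k:ℝ)) ⁻¹' E).indicator (fun _ => (1 : ENNReal)) ω := by
      intro ω
      by_cases hmem : ω + (k:ℝ) ∈ E <;>
        simp [Set.indicator_apply, Set.mem_preimage, hmem]
    calc volume (E ∩ Set.Ioc (k:ℝ) ((k:ℝ) + 1))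
        = volume ((fun ω : ℝ => ω + (k:ℝ)) ⁻¹' (E ∩ Set.Ioc (k:ℝ) ((k:ℝ) + 1))) :=
          (measure_preimage_add_right volume _ _).symm
      _ = (volume.restrict (Set.Ioc (0:ℝ) 1)) ((fun ω : ℝ => ω + (k:ℝ)) ⁻¹' E) := by
          rw [h1, Measure.restrict_apply hA]
      _ = ∫⁻ ω in Set.Ioc (0:ℝ) 1,
            ((fun ω : ℝ => ω + (k:ℝ)) ⁻¹' E).indicator (fun _ => (1 : ENNReal)) ω :=
          (lintegral_indicator_one hA).symm
      _ = ∫⁻ ω in Set.Ioc (0:ℝ) 1, E.indicator (fun _ => (1 : ENNReal)) (ω + (k:ℝ)) := by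
          refine lintegral_congr fun ω => (h2 ω).symm
  have hmble : ∀ k : ℤ, Measurable fun ω : ℝ => E.indicator (fun _ => (1 : ENNReal)) (ω + (k:ℝ)) :=
    fun k => (measurable_const.indicator hmeas).comp (measurable_add_const _)
  calc volume E = ∑' k : ℤ, volume (E ∩ Set.Ioc (k:ℝ) ((k:ℝ) + 1)) := by
        conv_lhs => rw [hcover]
        exact measure_iUnion hdisj fun k => hmeas.inter measurableSet_Ioc
    _ = ∑' k : ℤ, ∫⁻ ω in Set.Ioc (0:ℝ) 1, E.indicator (fun _ => (1 : ENNReal)) (ω + (k:ℝ)) :=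
        tsum_congr hk
    _ = ∫⁻ ω in Set.Ioc (0:ℝ) 1, ∑' k : ℤ, E.indicator (fun _ => (1 : ENNReal)) (ω + (k:ℝ)) :=
        (lintegral_tsum fun k => (hmble k).aemeasurable).symm
    _ ≤ ∫⁻ _ in Set.Ioc (0:ℝ) 1, (1 : ENNReal) :=
        lintegral_mono_ae (ae_restrict_of_ae hbound)
    _ = volume (Set.Ioc (0:ℝ) 1) := setLIntegral_one _
    _ = 1 := by rw [Real.volume_Ioc]; norm_num
end
end
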